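/- arXiv:2212.09861 — 12 statements merged into one kernel-verified Lean document; each statement's English description precedes it below -/
import Mathlib

section
/- Let G be a finite simple graph on n vertices with minimum degree δ, and let k ≥ 1. Then the k-L-Grundy domination number of G satisfies γ_gr^{L,k}(G) ≤ n − δ + k. -/
/-- A sequence `S` of distinct vertices is a generalized `k`-Grundy sequence with respect to
neighborhood assignments `N₁` (where the footprinted vertex must lie relative to the new
vertex) and `N₂` (the neighborhoods of earlier vertices that must contain the footprinted
vertex fewer than `k` times): for each position `i` there is a vertex `u ∈ N₁ (S i)` that
belongs to `N₂ w` for fewer than `k` of the vertices `w` preceding position `i`. -/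
def IsGrundySeq {V : Type*} (k : ℕ) (N₁ N₂ : V → Set V) (S : List V) : Prop :=
  S.Nodup ∧ ∀ (i : ℕ) (hi : i < S.length),
    ∃ u ∈ N₁ (S.get ⟨i, hi⟩), {w | w ∈ S.take i ∧ u ∈ N₂ w}.ncard < k

/-- The length of a longest generalized `k`-Grundy sequence. -/
noncomputable def grundyVal {V : Type*} (k : ℕ) (N₁ N₂ : V → Set V) : ℕ :=
  sSup {m | ∃ S : List V, IsGrundySeq k N₁ N₂ S ∧ S.length = m}

/-- The closed neighborhood `N[v]` of a vertex. -/
def closedNbhd {V : Type*} (G : SimpleGraph V) (v : V) : Set V :=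
  insert v (G.neighborSet v)

/-- The `k`-Grundy domination number `γ_gr^k(G)`. -/
noncomputable def kGrundy {V : Type*} (G : SimpleGraph V) (k : ℕ) : ℕ :=
  grundyVal k (closedNbhd G) (closedNbhd G)

/-- The `k`-`L`-Grundy domination number `γ_gr^{L,k}(G)`. -/
noncomputable def kLGrundy {V : Type*} (G : SimpleGraph V) (k : ℕ) : ℕ :=
  grundyVal k (closedNbhd G) G.neighborSet

/-- The `k`-`Z`-Grundy domination number `γ_gr^{Z,k}(G)`. -/
noncomputable def kZGrundy {V : Type*} (G : SimpleGraph V) (k : ℕ) : ℕ :=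
  grundyVal k G.neighborSet (closedNbhd G)

/-- The `k`-`t`-Grundy domination number `γ_gr^{t,k}(G)`. -/
noncomputable def ktGrundy {V : Type*} (G : SimpleGraph V) (k : ℕ) : ℕ :=
  grundyVal k G.neighborSet G.neighborSet

/-- The `k`-`L`-Grundy domination number of a graph on `n` vertices with minimum degree `δ`
is at most `n - δ + k`. -/
theorem kLGrundy_le_card_sub_minDegree_add_k {V : Type*} [Fintype V] [Nonempty V]
    (G : SimpleGraph V) [DecidableRel G.Adj] (k : ℕ) (hk : 1 ≤ k) :
    kLGrundy G k ≤ Fintype.card V - G.minDegree + k := by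
  classical
  rw [kLGrundy, grundyVal]
  have hne : {m | ∃ S : List V, IsGrundySeq k (closedNbhd G) G.neighborSet S ∧ S.length = m}.Nonempty :=
    ⟨0, [], ⟨List.nodup_nil, fun i hi => by simp at hi⟩, rfl⟩
  apply csSup_le hne
  rintro mm ⟨S, ⟨hnd, hseq⟩, rfl⟩
  set n := Fintype.card V with hn
  rcases Nat.eq_zero_or_pos S.length with h0 | hpos
  · simp [h0]
  obtain ⟨m, hm'⟩ : ∃ m, S.length = m + 1 := ⟨S.length - 1, by omega⟩
  have hlt : m < S.length := by omega
  obtain ⟨u, hu1, hu2⟩ := hseq m hlt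
  set F : Finset V := (S.take m).toFinset.filter (fun w => G.Adj w u) with hF
  have hset : {w | w ∈ S.take m ∧ u ∈ G.neighborSet w} = (↑F : Set V) := by
    ext w
    simp [hF, SimpleGraph.mem_neighborSet]
  rw [hset, Set.ncard_coe_finset] at hu2
  -- decompose S
  have hdrop : S.drop m = [S.get ⟨m, hlt⟩] := by
    have h2 : S.drop m = S.get ⟨m, hlt⟩ :: S.drop (m + 1) := by
      rw [List.get_eq_getElem]
      exact List.drop_eq_getElem_cons hlt
    rw [h2, List.drop_eq_nil_of_le (by omega)]
  have hSdecomp : S = S.take m ++ [S.get ⟨m, hlt⟩] := by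
    conv_lhs => rw [← List.take_append_drop m S]
    rw [hdrop]
  have hsub : G.neighborFinset u ∩ S.toFinset ⊆ insert (S.get ⟨m, hlt⟩) F := by
    intro w hw
    simp only [Finset.mem_inter, SimpleGraph.mem_neighborFinset, List.mem_toFinset] at hw
    obtain ⟨hadj, hwS⟩ := hw
    rw [hSdecomp] at hwS
    rcases List.mem_append.mp hwS with h | h
    · exact Finset.mem_insert_of_mem (by simp [hF, h, hadj.symm])
    · simp only [List.mem_singleton] at h
      exact h ▸ Finset.mem_insert_self _ _
  have hinter : (G.neighborFinset u ∩ S.toFinset).card ≤ k :=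
    le_trans (Finset.card_le_card hsub)
      (le_trans (Finset.card_insert_le _ _) (by omega))
  have hdeg : G.degree u ≤ (G.neighborFinset u \ S.toFinset).card + k := by
    have := Finset.card_sdiff_add_card_inter (G.neighborFinset u) S.toFinset
    rw [SimpleGraph.degree]
    omega
  have hdegn : G.degree u ≤ n := by
    rw [SimpleGraph.degree]
    exact Finset.card_le_univ _
  have hmin : G.minDegree ≤ G.degree u := G.minDegree_le_degree u
  have hAcard : S.toFinset.card = S.length := List.toFinset_card_of_nodup hnd
  have hunion : S.toFinset.card + (G.neighborFinset u \ S.toFinset).card ≤ n := by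
    rw [← Finset.card_union_of_disjoint Finset.sdiff_disjoint.symm]
    exact Finset.card_le_univ _
  omega
end

section
/- Let G be a finite simple graph on n vertices with minimum degree δ, and let k ≥ 1. Then γ_gr^{t,k}(G) ≤ n − δ + k, and γ_gr^{Z,k}(G) ≤ γ_gr^k(G) ≤ n − δ + k − 1. -/
lemma isGrundySeq_nil {V : Type*} (k : ℕ) (N₁ N₂ : V → Set V) :
    IsGrundySeq k N₁ N₂ ([] : List V) :=
  ⟨List.nodup_nil, fun i hi => by simp at hi⟩

lemma grundyVal_le {V : Type*} (k : ℕ) (N₁ N₂ : V → Set V) (b : ℕ)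
    (h : ∀ S, IsGrundySeq k N₁ N₂ S → S.length ≤ b) :
    grundyVal k N₁ N₂ ≤ b := by
  have h0 : 0 ∈ {m | ∃ S : List V, IsGrundySeq k N₁ N₂ S ∧ S.length = m} :=
    ⟨[], isGrundySeq_nil k N₁ N₂, rfl⟩
  apply csSup_le ⟨0, h0⟩
  rintro m ⟨S, hS, rfl⟩
  exact h S hS

/-- The central counting argument. -/
lemma grundy_core {V : Type*} [Fintype V] [Nonempty V] (k d : ℕ)
    (N₁ N₂ : V → Set V)
    (hd : ∀ u, d ≤ (N₂ u).ncard)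
    (hsym : ∀ x y, x ∈ N₂ y ↔ y ∈ N₂ x)
    (S : List V) (h : IsGrundySeq k N₁ N₂ S) :
    S.length + d ≤ Fintype.card V + k := by
  classical
  obtain ⟨hnd, hseq⟩ := h
  have hcard : ∀ s : Set V, s.ncard ≤ Fintype.card V := by
    intro s
    have := Set.ncard_le_ncard (Set.subset_univ s) (Set.toFinite _)
    simpa [Set.ncard_univ, Nat.card_eq_fintype_card] using this
  rcases Nat.eq_zero_or_pos S.length with h0 | hm
  · have := hd (Classical.arbitrary V)
    have := hcard (N₂ (Classical.arbitrary V))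
    omega
  · set m := S.length with hmdef
    have hlt : m - 1 < m := by omega
    obtain ⟨u, hu, hT⟩ := hseq (m - 1) hlt
    set v := S.get ⟨m - 1, hlt⟩ with hv
    set A : Set V := {x | x ∈ S} with hAdef
    set B : Set V := N₂ u with hBdef
    set T : Set V := {w | w ∈ S.take (m - 1) ∧ u ∈ N₂ w} with hTdef
    have hdrop : S.drop (m - 1) = [v] := by
      apply List.ext_get
      · simp [hmdef]; omega
      · intro i h1 h2
        simp only [List.length_drop] at h1
        have : i = 0 := by omega
        subst this
        simp [List.getElem_drop, hv]
    have hAB : A ∩ B ⊆ T ∪ {v} := by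
      rintro x ⟨hxS, hxB⟩
      by_cases hx : x ∈ S.take (m - 1)
      · exact Or.inl ⟨hx, (hsym x u).mp hxB⟩
      · right
        have : x ∈ S.take (m - 1) ++ S.drop (m - 1) := by
          rw [List.take_append_drop]; exact hxS
        rcases List.mem_append.mp this with h' | h'
        · exact absurd h' hx
        · rw [hdrop] at h'
          simpa using h'
    have h1 : (A ∩ B).ncard ≤ k := by
      calc (A ∩ B).ncard ≤ (T ∪ {v}).ncard :=
            Set.ncard_le_ncard hAB (Set.toFinite _)
        _ ≤ T.ncard + ({v} : Set V).ncard := Set.ncard_union_le _ _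
        _ ≤ (k - 1) + 1 := by
            have : ({v} : Set V).ncard = 1 := Set.ncard_singleton v
            omega
        _ ≤ k := by omega
    have h2 : A.ncard = m := by
      have : A = ↑S.toFinset := by ext x; simp [hAdef]
      rw [this, Set.ncard_coe_finset, List.toFinset_card_of_nodup hnd]
    have h3 : (A ∪ B).ncard + (A ∩ B).ncard = A.ncard + B.ncard :=
      Set.ncard_union_add_ncard_inter A B
    have h4 := hcard (A ∪ B)
    have h5 : d ≤ B.ncard := hd u
    omega

lemma ncard_neighborSet {V : Type*} [Fintype V] (G : SimpleGraph V) [DecidableRel G.Adj]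
    (u : V) : (G.neighborSet u).ncard = G.degree u := by
  rw [Set.ncard_eq_toFinset_card']
  rfl

lemma ncard_closedNbhd {V : Type*} [Fintype V] (G : SimpleGraph V) [DecidableRel G.Adj]
    (u : V) : (closedNbhd G u).ncard = G.degree u + 1 := by
  rw [closedNbhd, Set.ncard_insert_of_notMem (by simp) (Set.toFinite _),
    ncard_neighborSet]

/-- `γ_gr^{t,k}(G) ≤ n - δ + k` and `γ_gr^{Z,k}(G) ≤ γ_gr^k(G) ≤ n - δ + k - 1`. -/
theorem grundy_numbers_degree_bounds {V : Type*} [Fintype V] [Nonempty V]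
    (G : SimpleGraph V) [DecidableRel G.Adj] (k : ℕ) (hk : 1 ≤ k) :
    ktGrundy G k ≤ Fintype.card V - G.minDegree + k ∧
      kZGrundy G k ≤ kGrundy G k ∧
      kGrundy G k ≤ Fintype.card V - G.minDegree + k - 1 := by
  classical
  have hsym_open : ∀ x y : V, x ∈ G.neighborSet y ↔ y ∈ G.neighborSet x := by
    intro x y
    simp [SimpleGraph.mem_neighborSet, G.adj_comm]
  have hsym_closed : ∀ x y : V, x ∈ closedNbhd G y ↔ y ∈ closedNbhd G x := by
    intro x y
    simp only [closedNbhd, Set.mem_insert_iff, SimpleGraph.mem_neighborSet]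
    rw [G.adj_comm, eq_comm]
  have hd_open : ∀ u : V, G.minDegree ≤ (G.neighborSet u).ncard := fun u => by
    rw [ncard_neighborSet]; exact G.minDegree_le_degree u
  have hd_closed : ∀ u : V, G.minDegree + 1 ≤ (closedNbhd G u).ncard := fun u => by
    rw [ncard_closedNbhd]
    have := G.minDegree_le_degree u
    omega
  refine ⟨?_, ?_, ?_⟩
  · apply grundyVal_le
    intro S hS
    have := grundy_core k G.minDegree _ _ hd_open hsym_open S hS
    omega
  · apply csSup_le_csSup
    · refine ⟨Fintype.card V, ?_⟩
      rintro m ⟨S, hS, rfl⟩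
      simpa using hS.1.length_le_card
    · exact ⟨0, [], isGrundySeq_nil _ _ _, rfl⟩
    · rintro m ⟨S, ⟨hnd, hseq⟩, rfl⟩
      refine ⟨S, ⟨hnd, ?_⟩, rfl⟩
      intro i hi
      obtain ⟨u, hu, hT⟩ := hseq i hi
      exact ⟨u, Or.inr hu, hT⟩
  · apply grundyVal_le
    intro S hS
    have := grundy_core k (G.minDegree + 1) _ _ hd_closed hsym_closed S hS
    omega
end

section
/- Let G be a finite simple graph on n vertices and let k ≥ 1. Then γ_gr^{Z,k}(G) ≥ n − F_k(G), where F_k(G) is the k-forcing number of G. -/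
/-- One step of the `k`-forcing color change rule: a blue vertex with at most `k` white
neighbors colors all of its white neighbors blue. -/
def kForceStep {V : Type*} (G : SimpleGraph V) (k : ℕ) (S : Set V) : Set V :=
  S ∪ {w | ∃ b ∈ S, G.Adj b w ∧ {x | G.Adj b x ∧ x ∉ S}.ncard ≤ k}

/-- A set `B` is a `k`-forcing set if iterating the color change rule starting from `B`
eventually colors every vertex blue. -/
def IsKForcingSet {V : Type*} (G : SimpleGraph V) (k : ℕ) (B : Set V) : Prop :=
  ∃ m : ℕ, (kForceStep G k)^[m] B = Set.univ

/-- The `k`-forcing number `F_k(G)`: the minimum size of a `k`-forcing set. -/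
noncomputable def kForcingNumber {V : Type*} (G : SimpleGraph V) (k : ℕ) : ℕ :=
  sInf {m | ∃ B : Set V, IsKForcingSet G k B ∧ B.ncard = m}

/-- `γ_gr^{Z,k}(G) ≥ n - F_k(G)`. -/
theorem kZGrundy_ge_card_sub_kForcingNumber {V : Type*} [Fintype V]
    (G : SimpleGraph V) (k : ℕ) (hk : 1 ≤ k) :
    Fintype.card V - kForcingNumber G k ≤ kZGrundy G k := by
  classical
  have hne : {m | ∃ B : Set V, IsKForcingSet G k B ∧ B.ncard = m}.Nonempty :=
    ⟨(Set.univ : Set V).ncard, Set.univ, ⟨0, rfl⟩, rfl⟩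
  obtain ⟨B, hBforce, hBcard⟩ := Nat.sInf_mem hne
  obtain ⟨m, hm⟩ := hBforce
  set F := kForceStep G k with hF
  have hmono : ∀ j, F^[j] B ⊆ F^[j+1] B := by
    intro j
    rw [Function.iterate_succ_apply']
    exact Set.subset_union_left
  have hex : ∀ v : V, ∃ j, v ∈ F^[j] B := fun v => ⟨m, by rw [hm]; trivial⟩
  set t : V → ℕ := fun v => Nat.find (hex v) with ht
  have htmem : ∀ v, v ∈ F^[t v] B := fun v => Nat.find_spec (hex v)
  have htmin : ∀ v j, j < t v → v ∉ F^[j] B := fun v j hj => Nat.find_min (hex v) hj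
  have htle : ∀ v j, v ∈ F^[j] B → t v ≤ j := fun v j h => Nat.find_le h
  -- the list of non-B vertices, sorted by decreasing forcing time
  set L0 := (Set.toFinite Bᶜ).toFinset.toList with hL0
  set L := L0.mergeSort (fun a b => decide (t b ≤ t a)) with hL
  have hperm := L0.mergeSort_perm (fun a b => decide (t b ≤ t a))
  have hnodup : L.Nodup := hperm.nodup_iff.mpr (Finset.nodup_toList _)
  have hmemL : ∀ v, v ∈ L ↔ v ∉ B := by
    intro v
    rw [hL, hperm.mem_iff, hL0, Finset.mem_toList, Set.Finite.mem_toFinset, Set.mem_compl_iff]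
  have hsorted : List.Pairwise (fun a b => t b ≤ t a) L := by
    have h := List.pairwise_mergeSort (le := fun a b => decide (t b ≤ t a))
      (fun a b c hab hbc => by simp only [decide_eq_true_eq] at hab hbc ⊢; omega)
      (fun a b => by simp; omega) L0
    rw [← hL] at h
    exact h.imp (fun h => by simpa using h)
  have hget : ∀ (i j : Fin L.length), i < j → t (L.get j) ≤ t (L.get i) :=
    List.pairwise_iff_get.mp hsorted
  -- L is a Grundy sequence
  have hgr : IsGrundySeq k G.neighborSet (closedNbhd G) L := by
    refine ⟨hnodup, fun i hi => ?_⟩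
    set v := L.get ⟨i, hi⟩ with hv
    have hvL : v ∈ L := List.get_mem L ⟨i, hi⟩
    have hvB : v ∉ B := (hmemL v).mp hvL
    have htv1 : 1 ≤ t v := by
      rcases Nat.eq_zero_or_pos (t v) with h0 | h0
      · have := htmem v
        rw [h0, Function.iterate_zero_apply] at this
        exact absurd this hvB
      · exact h0
    set Sprev := F^[t v - 1] B with hSprev
    have hvnot : v ∉ Sprev := htmin v _ (by omega)
    have hvmem : v ∈ F Sprev := by
      have : F^[t v] B = F Sprev := by
        conv_lhs => rw [show t v = (t v - 1) + 1 by omega]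
        rw [Function.iterate_succ_apply']
      exact this ▸ htmem v
    rw [hF] at hvmem
    rcases hvmem with h | h
    · exact absurd h hvnot
    obtain ⟨b, hbS, hadj, hcount⟩ := h
    refine ⟨b, hadj.symm, ?_⟩
    set Big := {x | G.Adj b x ∧ x ∉ Sprev} with hBig
    have hvBig : v ∈ Big := ⟨hadj, hvnot⟩
    have hsub : {w | w ∈ L.take i ∧ b ∈ closedNbhd G w} ⊆ Big \ {v} := by
      rintro w ⟨hwt, hwc⟩
      obtain ⟨j, hjlen, hw⟩ := List.getElem_of_mem hwt
      have hlt := hjlen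
      rw [List.length_take] at hlt
      have hjlt : j < i := by omega
      have hjL : j < L.length := by omega
      have hw' : L.get ⟨j, hjL⟩ = w := by
        rw [← hw, List.getElem_take, List.get_eq_getElem]
      have htw : t v ≤ t w := by
        have := hget ⟨j, hjL⟩ ⟨i, hi⟩ hjlt
        rw [hw'] at this
        exact this
      have hwnot : w ∉ Sprev := fun hmem => by
        have := htle w _ hmem
        omega
      have hwv : w ≠ v := by
        intro h
        have : (⟨j, hjL⟩ : Fin L.length) = ⟨i, hi⟩ :=
          hnodup.get_inj_iff.mp (by rw [hw', h])
        simp at this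
        omega
      have hbadj : G.Adj b w := by
        rcases hwc with h | h
        · exact absurd (h ▸ hbS) hwnot
        · exact (G.mem_neighborSet w b).mp h |>.symm
      exact ⟨⟨hbadj, hwnot⟩, hwv⟩
    have hfin : (Big \ {v}).Finite := Set.toFinite _
    have h1 : {w | w ∈ L.take i ∧ b ∈ closedNbhd G w}.ncard ≤ (Big \ {v}).ncard :=
      Set.ncard_le_ncard hsub hfin
    have h2 : (Big \ {v}).ncard = Big.ncard - 1 :=
      Set.ncard_diff_singleton_of_mem hvBig
    have h3 : 0 < Big.ncard := (Set.ncard_pos (Set.toFinite _)).mpr ⟨v, hvBig⟩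
    omega
  -- length of L
  have hlen : L.length = Fintype.card V - B.ncard := by
    have h1 : L.length = Bᶜ.ncard := by
      rw [hL, (L0.mergeSort_perm _).length_eq, hL0, Finset.length_toList,
        ← Set.ncard_eq_toFinset_card]
    have h2 := Set.ncard_add_ncard_compl B (Set.toFinite _) (Set.toFinite _)
    rw [Nat.card_eq_fintype_card] at h2
    omega
  -- conclude
  have hmem : L.length ∈ {n | ∃ S : List V,
      IsGrundySeq k G.neighborSet (closedNbhd G) S ∧ S.length = n} := ⟨L, hgr, rfl⟩
  have hbdd : BddAbove {n | ∃ S : List V,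
      IsGrundySeq k G.neighborSet (closedNbhd G) S ∧ S.length = n} := by
    refine ⟨Fintype.card V, fun n hn => ?_⟩
    obtain ⟨S, hS, rfl⟩ := hn
    exact hS.1.length_le_card
  have hfin : L.length ≤ kZGrundy G k := le_csSup hbdd hmem
  have hkf : kForcingNumber G k = B.ncard := by
    rw [kForcingNumber]; exact hBcard.symm
  omega
end

section
/- For the cycle C_n on n ≥ 3 vertices, the 2-Grundy domination number satisfies γ_gr^2(C_n) = n − 1. -/
lemma mem_closedNbhd_comm {V : Type*} {G : SimpleGraph V} {u v : V} :
    u ∈ closedNbhd G v ↔ v ∈ closedNbhd G u := by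
  simp only [closedNbhd, Set.mem_insert_iff, SimpleGraph.mem_neighborSet]
  rw [SimpleGraph.adj_comm, eq_comm]

lemma mem_closedNbhd_cycle {m : ℕ} {u v : Fin (m+3)} :
    u ∈ closedNbhd (SimpleGraph.cycleGraph (m+3)) v ↔ u = v - 1 ∨ u = v ∨ u = v + 1 := by
  have h : (SimpleGraph.cycleGraph (m+1+2)).neighborSet v = {v - 1, v + 1} :=
    SimpleGraph.cycleGraph_neighborSet
  simp only [closedNbhd, show m+3 = m+1+2 from rfl, h, Set.mem_insert_iff,
    Set.mem_singleton_iff]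
  tauto

-- membership in take of finRange

lemma mem_take_finRange {m i : ℕ} {w : Fin (m+3)} (hw : w ∈ (List.finRange (m+3)).take i) :
    w.val < i := by
  obtain ⟨k, hk, hkw⟩ := List.mem_iff_getElem.mp hw
  simp only [List.length_take, List.length_finRange, lt_min_iff] at hk
  rw [List.getElem_take, List.getElem_finRange] at hkw
  subst hkw
  simpa using hk.1

lemma lower {m : ℕ} :
    IsGrundySeq 2 (closedNbhd (SimpleGraph.cycleGraph (m+3)))
      (closedNbhd (SimpleGraph.cycleGraph (m+3))) ((List.finRange (m+3)).take (m+2)) := by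
  constructor
  · exact ((List.finRange (m+3)).take_sublist (m+2)).nodup (List.nodup_finRange _)
  · intro i hi
    have hlen : ((List.finRange (m+3)).take (m+2)).length = m+2 := by simp
    rw [hlen] at hi
    have hget : ((List.finRange (m+3)).take (m+2)).get ⟨i, by rw [hlen]; exact hi⟩
        = ⟨i, by omega⟩ := by
      simp [List.getElem_take, List.getElem_finRange]
    refine ⟨⟨i+1, by omega⟩, ?_, ?_⟩
    · rw [hget, mem_closedNbhd_cycle]
      right; right
      apply Fin.ext
      rw [Fin.val_add_one_of_lt (by rw [Fin.lt_iff_val_lt_val]; simp; omega)]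
    · have hsub : {w | w ∈ ((List.finRange (m+3)).take (m+2)).take i ∧
          (⟨i+1, by omega⟩ : Fin (m+3)) ∈ closedNbhd (SimpleGraph.cycleGraph (m+3)) w}
          ⊆ {(0 : Fin (m+3))} := by
        rintro w ⟨hw1, hw2⟩
        rw [List.take_take] at hw1
        have hwlt : w.val < i := lt_of_lt_of_le (mem_take_finRange hw1) (by omega)
        rw [mem_closedNbhd_comm, mem_closedNbhd_cycle] at hw2
        set u : Fin (m+3) := ⟨i+1, by omega⟩ with hu
        rcases hw2 with h | h | h
        · -- w = u - 1, so w + 1 = u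
          exfalso
          have h2 : w + 1 = u := by rw [h]; exact sub_add_cancel u 1
          have h3 := congrArg Fin.val h2
          rw [Fin.val_add, Fin.val_one, Nat.mod_eq_of_lt (by omega)] at h3
          simp only [hu] at h3
          omega
        · -- u = w : w.val = i+1 < i contradiction
          exfalso
          have := congrArg Fin.val h
          simp [hu] at this
          omega
        · -- w = u + 1
          have h3 := congrArg Fin.val h
          rw [Fin.val_add, Fin.val_one] at h3
          simp only [hu] at h3
          by_cases hlt : i + 1 + 1 < m + 3
          · rw [Nat.mod_eq_of_lt hlt] at h3
            omega
          · rw [show i + 1 + 1 = m + 3 by omega, Nat.mod_self] at h3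
            exact Set.mem_singleton_iff.mpr (Fin.ext (by simpa using h3))
      have h1 : {w | w ∈ ((List.finRange (m+3)).take (m+2)).take i ∧
          (⟨i+1, by omega⟩ : Fin (m+3)) ∈ closedNbhd (SimpleGraph.cycleGraph (m+3)) w}.ncard
          ≤ 1 := by
        calc _ ≤ ({(0 : Fin (m+3))} : Set (Fin (m+3))).ncard :=
              Set.ncard_le_ncard hsub (Set.finite_singleton _)
          _ = 1 := Set.ncard_singleton _
      omega

lemma fin_sub_one_ne {m : ℕ} (u : Fin (m+3)) : u - 1 ≠ u := by
  simp only [ne_eq, sub_eq_self]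
  intro h
  have := congrArg Fin.val h
  simp at this

lemma fin_ne_add_one {m : ℕ} (u : Fin (m+3)) : u ≠ u + 1 := by
  intro h
  have : (1 : Fin (m+3)) = 0 := by
    have := congrArg (· - u) h; simpa using this.symm
  simp [Fin.ext_iff] at this

lemma fin_sub_one_ne_add_one {m : ℕ} (u : Fin (m+3)) : u - 1 ≠ u + 1 := by
  intro h
  have : (2 : Fin (m+3)) = 0 := by
    have := congrArg (· - (u-1)) h
    simp at this
    rw [this]; rfl
  simp [Fin.ext_iff] at this
  rw [Nat.mod_eq_of_lt (by omega)] at this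
  omega

lemma closedNbhd_cycle_eq {m : ℕ} (u : Fin (m+3)) :
    closedNbhd (SimpleGraph.cycleGraph (m+3)) u = {u - 1, u, u + 1} := by
  ext w
  rw [mem_closedNbhd_cycle]
  simp [Set.mem_insert_iff]

lemma ncard_closedNbhd_cycle {m : ℕ} (u : Fin (m+3)) :
    (closedNbhd (SimpleGraph.cycleGraph (m+3)) u).ncard = 3 := by
  rw [closedNbhd_cycle_eq]
  rw [Set.ncard_insert_of_notMem (by
    simp only [Set.mem_insert_iff, Set.mem_singleton_iff, not_or]
    exact ⟨fin_sub_one_ne u, fin_sub_one_ne_add_one u⟩)]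
  rw [Set.ncard_insert_of_notMem (by
    simp only [Set.mem_singleton_iff]
    exact fin_ne_add_one u)]
  simp

lemma upper {m : ℕ} (S : List (Fin (m+3)))
    (hS : IsGrundySeq 2 (closedNbhd (SimpleGraph.cycleGraph (m+3)))
      (closedNbhd (SimpleGraph.cycleGraph (m+3))) S) : S.length ≤ m + 2 := by
  by_contra hlen
  push_neg at hlen
  have hle : S.length ≤ m + 3 := by
    simpa using hS.1.length_le_card
  have hlen3 : S.length = m + 3 := by omega
  have hi : m + 2 < S.length := by omega
  obtain ⟨u, hu, hcard⟩ := hS.2 (m+2) hi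
  set v : Fin (m+3) := S.get ⟨m+2, hi⟩ with hv
  -- v is not in the first m+2 entries
  have hvnot : v ∉ S.take (m+2) := by
    intro hmem
    obtain ⟨k, hk, hkv⟩ := List.mem_iff_getElem.mp hmem
    simp only [List.length_take] at hk
    rw [List.getElem_take] at hkv
    have : S[k] = S[m+2] := hkv
    have hkeq : k = m + 2 := (List.Nodup.getElem_inj_iff hS.1).mp this
    omega
  -- every vertex is in S
  have hall : ∀ x : Fin (m+3), x ∈ S := by
    have hcardS : S.toFinset = Finset.univ := by
      apply Finset.eq_univ_of_card
      rw [List.toFinset_card_of_nodup hS.1, hlen3]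
      simp
    intro x
    rw [← List.mem_toFinset, hcardS]
    exact Finset.mem_univ x
  -- the footprint set equals N[u] \ {v}
  have hEq : {w | w ∈ S.take (m+2) ∧ u ∈ closedNbhd (SimpleGraph.cycleGraph (m+3)) w}
      = closedNbhd (SimpleGraph.cycleGraph (m+3)) u \ {v} := by
    ext w
    simp only [Set.mem_setOf_eq, Set.mem_diff, Set.mem_singleton_iff]
    constructor
    · rintro ⟨hw1, hw2⟩
      refine ⟨mem_closedNbhd_comm.mp hw2, ?_⟩
      rintro rfl
      exact hvnot hw1
    · rintro ⟨hw1, hw2⟩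
      refine ⟨?_, mem_closedNbhd_comm.mp hw1⟩
      obtain ⟨k, hk, hkw⟩ := List.mem_iff_getElem.mp (hall w)
      have hklt : k < m + 2 := by
        rcases Nat.lt_or_ge k (m+2) with h | h
        · exact h
        · exfalso
          have : k = m + 2 := by omega
          subst this
          exact hw2 (by rw [← hkw]; rfl)
      refine List.mem_iff_getElem.mpr ⟨k, by simp [List.length_take]; omega, ?_⟩
      rw [List.getElem_take]
      exact hkw
  rw [hEq] at hcard
  have hvmem : v ∈ closedNbhd (SimpleGraph.cycleGraph (m+3)) u := mem_closedNbhd_comm.mp hu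
  rw [Set.ncard_diff_singleton_of_mem hvmem, ncard_closedNbhd_cycle] at hcard
  omega

/-- For `n ≥ 3`, `γ_gr^2(C_n) = n - 1`. -/
theorem kGrundy_cycleGraph (n : ℕ) (hn : 3 ≤ n) :
    kGrundy (SimpleGraph.cycleGraph n) 2 = n - 1 := by
  obtain ⟨m, rfl⟩ : ∃ m, n = m + 3 := ⟨n - 3, by omega⟩
  show grundyVal 2 _ _ = m + 3 - 1
  unfold grundyVal
  have hmem : m + 2 ∈ {m' | ∃ S : List (Fin (m+3)),
      IsGrundySeq 2 (closedNbhd (SimpleGraph.cycleGraph (m+3)))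
        (closedNbhd (SimpleGraph.cycleGraph (m+3))) S ∧ S.length = m'} :=
    ⟨(List.finRange (m+3)).take (m+2), lower, by simp⟩
  have hb : ∀ x ∈ {m' | ∃ S : List (Fin (m+3)),
      IsGrundySeq 2 (closedNbhd (SimpleGraph.cycleGraph (m+3)))
        (closedNbhd (SimpleGraph.cycleGraph (m+3))) S ∧ S.length = m'}, x ≤ m + 2 := by
    rintro x ⟨S, hS, rfl⟩
    exact upper S hS
  have : sSup {m' | ∃ S : List (Fin (m+3)),
      IsGrundySeq 2 (closedNbhd (SimpleGraph.cycleGraph (m+3)))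
        (closedNbhd (SimpleGraph.cycleGraph (m+3))) S ∧ S.length = m'} = m + 2 :=
    le_antisymm (csSup_le ⟨m + 2, hmem⟩ hb) (le_csSup ⟨m + 2, fun x hx => hb x hx⟩ hmem)
  rw [this]
  omega
end

section
/- For the complete graph K_n and any integer k with 1 ≤ k ≤ n − 1, the k-L-Grundy domination number satisfies γ_gr^{L,k}(K_n) = k + 1. -/
/-- For `1 ≤ k ≤ n - 1`, `γ_gr^{L,k}(K_n) = k + 1`. -/
theorem kLGrundy_completeGraph (n k : ℕ) (hk : 1 ≤ k) (hkn : k ≤ n - 1) :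
    kLGrundy (⊤ : SimpleGraph (Fin n)) k = k + 1 := by
  have hn : k + 1 ≤ n := by omega
  set G := (⊤ : SimpleGraph (Fin n)) with hG
  apply le_antisymm
  · apply csSup_le
    · exact ⟨0, [], ⟨List.nodup_nil, by simp⟩, rfl⟩
    · rintro m ⟨S, ⟨hnd, hseq⟩, rfl⟩
      by_contra h
      push_neg at h
      have hi : k + 1 < S.length := h
      obtain ⟨u, _, hcard⟩ := hseq (k+1) hi
      set l := S.take (k+1) with hl
      have hlnd : l.Nodup := hnd.sublist (List.take_sublist _ _)
      have hllen : l.length = k + 1 := by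
        simp only [hl, List.length_take]; omega
      have hset : {w | w ∈ S.take (k+1) ∧ u ∈ G.neighborSet w} = ↑(l.toFinset.erase u) := by
        ext w
        simp [SimpleGraph.mem_neighborSet, hG, hl]; exact fun _ => ne_comm
      rw [hset, Set.ncard_coe_finset] at hcard
      have h1 : l.toFinset.card = k + 1 := by
        rw [List.toFinset_card_of_nodup hlnd, hllen]
      have h2 := Finset.pred_card_le_card_erase (a := u) (s := l.toFinset)
      omega
  · apply le_csSup
    · refine ⟨n, ?_⟩
      rintro m ⟨S, ⟨hnd, _⟩, rfl⟩
      simpa using hnd.length_le_card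
    · refine ⟨(List.finRange n).take (k+1), ⟨?_, ?_⟩, ?_⟩
      · exact (List.nodup_finRange n).sublist (List.take_sublist _ _)
      · intro i hi
        have hlen : ((List.finRange n).take (k+1)).length = k + 1 := by
          simp only [List.length_take, List.length_finRange]; omega
        rw [hlen] at hi
        refine ⟨⟨0, by omega⟩, ?_, ?_⟩
        · rcases eq_or_ne (⟨0, by omega⟩ : Fin n) (((List.finRange n).take (k+1)).get ⟨i, by omega⟩) with h | h
          · exact h ▸ Set.mem_insert _ _
          · exact Set.mem_insert_iff.mpr (Or.inr h.symm)
        · have htake : ((List.finRange n).take (k+1)).take i = (List.finRange n).take i := by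
            rw [List.take_take]; congr 1; omega
          rw [htake]
          rcases Nat.eq_zero_or_pos i with h0 | h0
          · subst h0; simpa using (show 0 < k by omega)
          · have hset : {w | w ∈ (List.finRange n).take i ∧ (⟨0, by omega⟩ : Fin n) ∈ G.neighborSet w}
                = ↑(((List.finRange n).take i).toFinset.erase ⟨0, by omega⟩) := by
              ext w
              simp [SimpleGraph.mem_neighborSet, hG]; exact fun _ => ne_comm
            rw [hset, Set.ncard_coe_finset]
            have hmem : (⟨0, by omega⟩ : Fin n) ∈ ((List.finRange n).take i).toFinset := by
              rw [List.mem_toFinset]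
              have hidx : 0 < ((List.finRange n).take i).length := by
                simp only [List.length_take, List.length_finRange]; omega
              have heq : ((List.finRange n).take i)[0]'hidx = (⟨0, by omega⟩ : Fin n) := by
                simp [List.getElem_take]
              rw [← heq]
              exact List.getElem_mem hidx
            rw [Finset.card_erase_of_mem hmem,
              List.toFinset_card_of_nodup
                ((List.nodup_finRange n).sublist (List.take_sublist _ _))]
            simp only [List.length_take, List.length_finRange]
            omega
      · simp only [List.length_take, List.length_finRange]; omega
end

section
/- For the complete graph K_n and any integer k with 1 ≤ k ≤ n − 1, the k-t-Grundy domination number satisfies γ_gr^{t,k}(K_n) = k + 1. -/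
lemma ncard_nbr_eq (n : ℕ) (l : List (Fin n)) (u : Fin n) :
    {w | w ∈ l ∧ u ∈ (⊤ : SimpleGraph (Fin n)).neighborSet w}.ncard
      = (l.toFinset.erase u).card := by
  rw [← Set.ncard_coe_finset]
  congr 1
  ext w
  simp [SimpleGraph.mem_neighborSet, and_comm, eq_comm, ne_comm]

/-- For `1 ≤ k ≤ n - 1`, `γ_gr^{t,k}(K_n) = k + 1`. -/
theorem ktGrundy_completeGraph (n k : ℕ) (hk : 1 ≤ k) (hkn : k ≤ n - 1) :
    ktGrundy (⊤ : SimpleGraph (Fin n)) k = k + 1 := by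
  have hn : k + 1 ≤ n := by omega
  set G := (⊤ : SimpleGraph (Fin n))
  unfold ktGrundy grundyVal
  -- upper bound on every member of the set
  have hub : ∀ m ∈ {m | ∃ S : List (Fin n),
      IsGrundySeq k G.neighborSet G.neighborSet S ∧ S.length = m}, m ≤ k + 1 := by
    rintro m ⟨S, ⟨hnd, hseq⟩, rfl⟩
    by_contra hlt
    push_neg at hlt
    have hi : k + 1 < S.length := hlt
    obtain ⟨u, _, hcard⟩ := hseq (k + 1) hi
    rw [ncard_nbr_eq] at hcard
    have hndt : (S.take (k+1)).Nodup := (List.take_sublist _ _).nodup hnd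
    have hlen : (S.take (k+1)).toFinset.card = k + 1 := by
      rw [List.toFinset_card_of_nodup hndt, List.length_take]
      omega
    have := Finset.pred_card_le_card_erase (s := (S.take (k+1)).toFinset) (a := u)
    omega
  -- k+1 is attained
  have hmem : k + 1 ∈ {m | ∃ S : List (Fin n),
      IsGrundySeq k G.neighborSet G.neighborSet S ∧ S.length = m} := by
    refine ⟨(List.finRange n).take (k+1), ⟨(List.take_sublist _ _).nodup (List.nodup_finRange n), ?_⟩, ?_⟩
    · intro i hi
      have hlen' : ((List.finRange n).take (k+1)).length = k + 1 := by
        rw [List.length_take, List.length_finRange]; omega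
      have hik : i < k + 1 := by omega
      have hin : i < n := by omega
      have hget : ((List.finRange n).take (k+1)).get ⟨i, hi⟩ = ⟨i, hin⟩ := by
        simp [List.getElem_take, List.getElem_finRange]
      rcases Nat.eq_zero_or_pos i with h0 | hpos
      · subst h0
        refine ⟨⟨1, by omega⟩, ?_, ?_⟩
        · rw [hget]
          simp [G, SimpleGraph.mem_neighborSet, Fin.ext_iff]
        · have : {w | w ∈ ((List.finRange n).take (k+1)).take 0 ∧
              (⟨1, by omega⟩ : Fin n) ∈ G.neighborSet w} = ∅ := by
            simp
          rw [this, Set.ncard_empty]; omega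
      · refine ⟨⟨0, by omega⟩, ?_, ?_⟩
        · simp only [hget]
          simp [G, SimpleGraph.mem_neighborSet, Fin.ext_iff]
          omega
        · rw [ncard_nbr_eq]
          have hndt : (((List.finRange n).take (k+1)).take i).Nodup :=
            (List.take_sublist _ _).nodup ((List.take_sublist _ _).nodup (List.nodup_finRange n))
          have htake : ((List.finRange n).take (k+1)).take i = (List.finRange n).take i := by
            rw [List.take_take]; congr 1; omega
          have hmem0 : (⟨0, by omega⟩ : Fin n) ∈ (((List.finRange n).take (k+1)).take i).toFinset := by
            rw [htake, List.mem_toFinset]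
            have : (⟨0, by omega⟩ : Fin n) = (List.finRange n).get ⟨0, by simpa using (by omega : 0 < n)⟩ := by
              simp [List.getElem_finRange]
            rw [this]
            exact List.mem_take_iff_getElem.mpr ⟨0, by simpa using ⟨by omega, by omega⟩, by simp⟩
          rw [Finset.card_erase_of_mem hmem0, List.toFinset_card_of_nodup hndt,
            List.length_take, List.length_take, List.length_finRange]
          omega
    · rw [List.length_take, List.length_finRange]; omega
  exact le_antisymm (csSup_le ⟨k+1, hmem⟩ hub) (le_csSup ⟨k+1, hub⟩ hmem)
end

section
/- Let K_{m,n} be the complete bipartite graph with parts of sizes m and n, where m ≥ n ≥ k ≥ 1. Then the k-Grundy domination number satisfies γ_gr^k(K_{m,n}) = m + k − 1. -/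
lemma mem_closedNbhd' {V : Type*} (G : SimpleGraph V) (u w : V) :
    u ∈ closedNbhd G w ↔ u = w ∨ G.Adj w u := by
  simp [closedNbhd, SimpleGraph.mem_neighborSet]

lemma self_mem_closedNbhd {V : Type*} (G : SimpleGraph V) (v : V) : v ∈ closedNbhd G v := by
  simp [closedNbhd]

lemma getElem_not_mem_take {V : Type*} {S : List V} (h : S.Nodup) {i : ℕ} (hi : i < S.length) :
    S[i] ∉ S.take i := by
  have hd : S[i] ∈ S.drop i := by
    have h0 : 0 < (S.drop i).length := by simp; omega
    have : (S.drop i)[0] = S[i] := by rw [List.getElem_drop]; simp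
    rw [← this]; exact List.getElem_mem _
  have := List.take_append_drop i S
  rw [← this, List.nodup_append] at h
  exact fun hm => h.2.2 _ hm _ hd rfl

lemma ncard_count {V : Type*} [DecidableEq V] (T : List V) (P : V → Prop) [DecidablePred P] :
    {w | w ∈ T ∧ P w}.ncard = (T.toFinset.filter P).card := by
  rw [← Set.ncard_coe_finset]
  congr 1
  ext w
  simp [and_comm]

section Bipartite

variable {m n : ℕ}

local notation "KG" => completeBipartiteGraph (Fin m) (Fin n)

lemma adj_inl_inr (a : Fin m) (b : Fin n) : (KG).Adj (Sum.inl a) (Sum.inr b) := by simp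
lemma adj_inr_inl (a : Fin m) (b : Fin n) : (KG).Adj (Sum.inr b) (Sum.inl a) := by simp
lemma not_adj_inl_inl (a a' : Fin m) : ¬ (KG).Adj (Sum.inl a) (Sum.inl a') := by simp
lemma not_adj_inr_inr (b b' : Fin n) : ¬ (KG).Adj (Sum.inr b) (Sum.inr b') := by simp

lemma kgrundy_upper (k : ℕ) (hk : 1 ≤ k) (hkn : k ≤ n) (hnm : n ≤ m)
    (S : List (Fin m ⊕ Fin n)) (hS : IsGrundySeq k (closedNbhd KG) (closedNbhd KG) S) :
    S.length ≤ m + k - 1 := by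
  classical
  by_contra h
  push_neg at h
  have hi : m + k - 1 < S.length := h
  obtain ⟨hnd, hcond⟩ := hS
  obtain ⟨u, _, hcnt⟩ := hcond (m + k - 1) hi
  set T := S.take (m + k - 1) with hT
  have hTnd : T.Nodup := (List.take_sublist _ _).nodup hnd
  have hTlen : T.length = m + k - 1 := by
    rw [hT, List.length_take]; omega
  set F := T.toFinset with hF
  have hFcard : F.card = m + k - 1 := by
    rw [hF, List.toFinset_card_of_nodup hTnd, hTlen]
  set Fl := F.filter (fun w => w.isLeft) with hFl
  set Fr := F.filter (fun w => ¬ w.isLeft) with hFr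
  have hlr : Fl.card + Fr.card = m + k - 1 := by
    rw [hFl, hFr, Finset.card_filter_add_card_filter_not, hFcard]
  have hlcard : Fl.card ≤ m := by
    have hsub : Fl ⊆ Finset.univ.image (Sum.inl : Fin m → Fin m ⊕ Fin n) := by
      intro w hw
      rw [hFl, Finset.mem_filter] at hw
      obtain ⟨a, rfl⟩ := Sum.isLeft_iff.mp hw.2
      simp
    calc Fl.card ≤ _ := Finset.card_le_card hsub
      _ ≤ Finset.univ.card := Finset.card_image_le.trans (le_of_eq (Finset.card_univ))
      _ = m := by simp
  have hrcard : Fr.card ≤ n := by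
    have hsub : Fr ⊆ Finset.univ.image (Sum.inr : Fin n → Fin m ⊕ Fin n) := by
      intro w hw
      rw [hFr, Finset.mem_filter] at hw
      obtain ⟨b, rfl⟩ := Sum.isRight_iff.mp (Sum.not_isLeft.mp hw.2)
      simp
    calc Fr.card ≤ _ := Finset.card_le_card hsub
      _ ≤ Finset.univ.card := Finset.card_image_le.trans (le_of_eq (Finset.card_univ))
      _ = n := by simp
  set Fu := F.filter (fun w => u ∈ closedNbhd KG w) with hFu
  have hcnt' : Fu.card < k := by
    rw [← ncard_count T _] at *
    exact hcnt
  cases u with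
  | inl a =>
    -- every right vertex of T is in Fu
    have hFrFu : Fr ⊆ Fu := by
      intro w hw
      rw [hFr, Finset.mem_filter] at hw
      obtain ⟨b, rfl⟩ := Sum.isRight_iff.mp (Sum.not_isLeft.mp hw.2)
      rw [hFu, Finset.mem_filter]
      exact ⟨hw.1, (mem_closedNbhd' _ _ _).mpr (Or.inr (adj_inr_inl a b))⟩
    have hr' : Fr.card < k := lt_of_le_of_lt (Finset.card_le_card hFrFu) hcnt'
    have hFlm : Fl.card = m := by omega
    -- all left vertices are in T, in particular inl a
    have hFleq : Fl = Finset.univ.image (Sum.inl : Fin m → Fin m ⊕ Fin n) := by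
      apply Finset.eq_of_subset_of_card_le
      · intro w hw
        rw [hFl, Finset.mem_filter] at hw
        obtain ⟨a', rfl⟩ := Sum.isLeft_iff.mp hw.2
        simp
      · rw [hFlm, Finset.card_image_of_injective _ Sum.inl_injective]; simp
    have hainT : (Sum.inl a : Fin m ⊕ Fin n) ∈ F := by
      have : (Sum.inl a : Fin m ⊕ Fin n) ∈ Fl := by rw [hFleq]; simp
      exact Finset.mem_of_mem_filter _ this
    have hains : insert (Sum.inl a : Fin m ⊕ Fin n) Fr ⊆ Fu := by
      intro w hw
      rcases Finset.mem_insert.mp hw with rfl | hw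
      · rw [hFu, Finset.mem_filter]
        exact ⟨hainT, self_mem_closedNbhd _ _⟩
      · exact hFrFu hw
    have hnotin : (Sum.inl a : Fin m ⊕ Fin n) ∉ Fr := by
      rw [hFr, Finset.mem_filter]; simp
    have : k ≤ Fu.card := by
      have := Finset.card_le_card hains
      rw [Finset.card_insert_of_notMem hnotin] at this
      omega
    omega
  | inr b =>
    have hFlFu : Fl ⊆ Fu := by
      intro w hw
      rw [hFl, Finset.mem_filter] at hw
      obtain ⟨a', rfl⟩ := Sum.isLeft_iff.mp hw.2
      rw [hFu, Finset.mem_filter]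
      exact ⟨hw.1, (mem_closedNbhd' _ _ _).mpr (Or.inr (adj_inl_inr a' b))⟩
    have hl' : Fl.card < k := lt_of_le_of_lt (Finset.card_le_card hFlFu) hcnt'
    have hFrn : Fr.card = n := by omega
    have hmn : m = n := by omega
    have hFlk : Fl.card = k - 1 := by omega
    have hFreq : Fr = Finset.univ.image (Sum.inr : Fin n → Fin m ⊕ Fin n) := by
      apply Finset.eq_of_subset_of_card_le
      · intro w hw
        rw [hFr, Finset.mem_filter] at hw
        obtain ⟨b', rfl⟩ := Sum.isRight_iff.mp (Sum.not_isLeft.mp hw.2)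
        simp
      · rw [hFrn, Finset.card_image_of_injective _ Sum.inr_injective]; simp
    have hbinT : (Sum.inr b : Fin m ⊕ Fin n) ∈ F := by
      have : (Sum.inr b : Fin m ⊕ Fin n) ∈ Fr := by rw [hFreq]; simp
      exact Finset.mem_of_mem_filter _ this
    have hbins : insert (Sum.inr b : Fin m ⊕ Fin n) Fl ⊆ Fu := by
      intro w hw
      rcases Finset.mem_insert.mp hw with rfl | hw
      · rw [hFu, Finset.mem_filter]
        exact ⟨hbinT, self_mem_closedNbhd _ _⟩
      · exact hFlFu hw
    have hnotin : (Sum.inr b : Fin m ⊕ Fin n) ∉ Fl := by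
      rw [hFl, Finset.mem_filter]; simp
    have : k ≤ Fu.card := by
      have := Finset.card_le_card hbins
      rw [Finset.card_insert_of_notMem hnotin] at this
      omega
    omega

lemma kgrundy_lower (k : ℕ) (hk : 1 ≤ k) (hkn : k ≤ n) (hnm : n ≤ m) :
    ∃ S : List (Fin m ⊕ Fin n),
      IsGrundySeq k (closedNbhd KG) (closedNbhd KG) S ∧ S.length = m + k - 1 := by
  classical
  have hkn' : k - 1 ≤ n := by omega
  set A : List (Fin m ⊕ Fin n) :=
    (List.finRange (k - 1)).map (fun j => Sum.inr (Fin.castLE hkn' j)) with hA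
  set B : List (Fin m ⊕ Fin n) := (List.finRange m).map Sum.inl with hB
  have hAlen : A.length = k - 1 := by simp [hA]
  have hBlen : B.length = m := by simp [hB]
  have hAnd : A.Nodup := by
    apply List.Nodup.map _ (List.nodup_finRange _)
    intro x y hxy
    simp only [Sum.inr.injEq] at hxy
    exact Fin.castLE_injective _ hxy
  have hBnd : B.Nodup := List.Nodup.map Sum.inl_injective (List.nodup_finRange _)
  have hdisj : A.Disjoint B := by
    intro x hxA hxB
    rw [hA, List.mem_map] at hxA
    rw [hB, List.mem_map] at hxB
    obtain ⟨j, _, rfl⟩ := hxA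
    obtain ⟨a, _, h⟩ := hxB
    exact Sum.inl_ne_inr h
  have hmemA : ∀ w ∈ A, ∃ b : Fin n, w = Sum.inr b := by
    intro w hw
    rw [hA] at hw
    obtain ⟨j, _, rfl⟩ := List.mem_map.mp hw
    exact ⟨_, rfl⟩
  have hmemB : ∀ w ∈ B, ∃ a : Fin m, w = Sum.inl a := by
    intro w hw
    rw [hB] at hw
    obtain ⟨a, _, rfl⟩ := List.mem_map.mp hw
    exact ⟨_, rfl⟩
  refine ⟨A ++ B, ⟨hAnd.append hBnd hdisj, ?_⟩, by simp [hAlen, hBlen]; omega⟩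
  intro i hi
  have hnd : (A ++ B).Nodup := hAnd.append hBnd hdisj
  have hilen : i < A.length + B.length := by simpa using hi
  by_cases hik : i < k - 1
  · -- right phase
    have hiA : i < A.length := by omega
    have hget : (A ++ B).get ⟨i, hi⟩ = A[i] := by
      simp [List.getElem_append_left hiA]
    refine ⟨(A ++ B).get ⟨i, hi⟩, self_mem_closedNbhd _ _, ?_⟩
    have hempty : {w | w ∈ (A ++ B).take i ∧ (A ++ B).get ⟨i, hi⟩ ∈ closedNbhd KG w} = ∅ := by
      ext w
      simp only [Set.mem_setOf_eq, Set.mem_empty_iff_false, iff_false, not_and]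
      intro hw hmem
      -- w is in take i of A, so w = inr b'
      have hwA : w ∈ A.take i := by
        rw [List.take_append] at hw
        have : i - A.length = 0 := by omega
        rw [this] at hw
        simpa using hw
      have hwA' : w ∈ A := (List.take_sublist _ _).mem hwA
      obtain ⟨b', rfl⟩ := hmemA w hwA'
      have hgA : A[i] ∈ A := List.getElem_mem _
      obtain ⟨b, hbeq⟩ := hmemA _ hgA
      rw [mem_closedNbhd'] at hmem
      rcases hmem with heq | hadj
      · have hnt : (A ++ B).get ⟨i, hi⟩ ∉ (A ++ B).take i :=
          getElem_not_mem_take hnd hi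
        exact hnt (heq ▸ hw)
      · rw [hget, hbeq] at hadj
        exact not_adj_inr_inr _ _ hadj
    rw [hempty]
    simpa using (show 0 < k by omega)
  · -- left phase
    have hiA : A.length ≤ i := by omega
    have hget : (A ++ B).get ⟨i, hi⟩ = B[i - A.length] := by
      simp [List.getElem_append_right hiA]
    have hBi : i - A.length < B.length := by omega
    obtain ⟨a, haeq⟩ := hmemB _ (List.getElem_mem hBi)
    refine ⟨(A ++ B).get ⟨i, hi⟩, self_mem_closedNbhd _ _, ?_⟩
    have hseteq : {w | w ∈ (A ++ B).take i ∧ (A ++ B).get ⟨i, hi⟩ ∈ closedNbhd KG w}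
        = {w | w ∈ A} := by
      ext w
      simp only [Set.mem_setOf_eq]
      constructor
      · rintro ⟨hw, hmem⟩
        rw [List.take_append, List.mem_append] at hw
        rcases hw with hw | hw
        · exact (List.take_sublist _ _).mem hw
        · exfalso
          have hwB : w ∈ B := (List.take_sublist _ _).mem hw
          obtain ⟨a', rfl⟩ := hmemB w hwB
          rw [mem_closedNbhd'] at hmem
          rcases hmem with heq | hadj
          · have hnt : (A ++ B).get ⟨i, hi⟩ ∉ (A ++ B).take i :=
              getElem_not_mem_take hnd hi
            apply hnt
            rw [heq]
            rw [List.take_append, List.mem_append]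
            exact Or.inr hw
          · rw [hget, haeq] at hadj
            exact not_adj_inl_inl _ _ hadj
      · intro hw
        refine ⟨?_, ?_⟩
        · rw [List.take_append, List.mem_append]
          left
          rwa [List.take_of_length_le (by omega)]
        · obtain ⟨b', rfl⟩ := hmemA w hw
          rw [mem_closedNbhd', hget, haeq]
          exact Or.inr (adj_inr_inl _ _)
    rw [hseteq]
    have : {w | w ∈ A} = (A.toFinset : Set (Fin m ⊕ Fin n)) := by
      ext w; simp
    rw [this, Set.ncard_coe_finset, List.toFinset_card_of_nodup hAnd, hAlen]
    omega

end Bipartite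

/-- For `m ≥ n ≥ k ≥ 1`, `γ_gr^k(K_{m,n}) = m + k - 1`. -/
theorem kGrundy_completeBipartiteGraph (m n k : ℕ) (hk : 1 ≤ k) (hkn : k ≤ n) (hnm : n ≤ m) :
    kGrundy (completeBipartiteGraph (Fin m) (Fin n)) k = m + k - 1 := by
  obtain ⟨S, hS, hSlen⟩ := kgrundy_lower (m := m) (n := n) k hk hkn hnm
  have hub : ∀ x ∈ {x | ∃ S : List (Fin m ⊕ Fin n),
      IsGrundySeq k (closedNbhd (completeBipartiteGraph (Fin m) (Fin n)))
        (closedNbhd (completeBipartiteGraph (Fin m) (Fin n))) S ∧ S.length = x}, x ≤ m + k - 1 := by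
    rintro x ⟨S', hS', rfl⟩
    exact kgrundy_upper k hk hkn hnm S' hS'
  have hmem : m + k - 1 ∈ {x | ∃ S : List (Fin m ⊕ Fin n),
      IsGrundySeq k (closedNbhd (completeBipartiteGraph (Fin m) (Fin n)))
        (closedNbhd (completeBipartiteGraph (Fin m) (Fin n))) S ∧ S.length = x} := ⟨S, hS, hSlen⟩
  unfold kGrundy grundyVal
  exact le_antisymm (csSup_le ⟨_, hmem⟩ hub) (le_csSup ⟨_, hub⟩ hmem)
end

section
/- Let K_{m,n} be the complete bipartite graph with parts of sizes m and n, where m ≥ n ≥ k ≥ 1. Then the k-L-Grundy domination number satisfies γ_gr^{L,k}(K_{m,n}) = m + k. -/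
open Sum in
private lemma ncard_filter_list' {V : Type*} [DecidableEq V] (l : List V) (P : V → Prop) [DecidablePred P] :
    {w | w ∈ l ∧ P w}.ncard = (l.toFinset.filter P).card := by
  rw [← Set.ncard_coe_finset]
  congr 1
  ext w
  simp

open Sum in
private lemma kLGrundy_upper (m n k : ℕ) (hk : 1 ≤ k) (hkn : k ≤ n) (hnm : n ≤ m)
    (S : List (Fin m ⊕ Fin n))
    (hS : IsGrundySeq k (closedNbhd (completeBipartiteGraph (Fin m) (Fin n)))
      (completeBipartiteGraph (Fin m) (Fin n)).neighborSet S) :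
    S.length ≤ m + k := by
  classical
  by_contra h
  push_neg at h
  obtain ⟨hnd, h2⟩ := hS
  obtain ⟨u, _, hu2⟩ := h2 (m + k) h
  set P := S.take (m + k) with hP
  have hPnd : P.Nodup := (List.take_sublist _ _).nodup hnd
  have hPlen : P.length = m + k := by simp [hP]; omega
  have hcard : P.toFinset.card = m + k := by
    rw [List.toFinset_card_of_nodup hPnd, hPlen]
  have hsplit : (P.toFinset.filter (fun w => w.isLeft)).card
      + (P.toFinset.filter (fun w => ¬ w.isLeft)).card = m + k := by
    rw [Finset.card_filter_add_card_filter_not]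
    exact hcard
  have hL : (P.toFinset.filter (fun w => w.isLeft)).card ≤ m := by
    have : (P.toFinset.filter (fun w => w.isLeft)) ⊆ (Finset.univ : Finset (Fin m)).image inl := by
      intro w hw
      simp only [Finset.mem_filter] at hw
      obtain ⟨x, rfl⟩ := Sum.isLeft_iff.mp hw.2
      simp
    calc _ ≤ ((Finset.univ : Finset (Fin m)).image inl).card := Finset.card_le_card this
      _ ≤ (Finset.univ : Finset (Fin m)).card := Finset.card_image_le
      _ = m := by simp
  have hR : (P.toFinset.filter (fun w => ¬ w.isLeft)).card ≤ n := by
    have : (P.toFinset.filter (fun w => ¬ w.isLeft)) ⊆ (Finset.univ : Finset (Fin n)).image inr := by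
      intro w hw
      simp only [Finset.mem_filter] at hw
      obtain ⟨x, rfl⟩ := Sum.isRight_iff.mp (Sum.not_isLeft.mp hw.2)
      simp
    calc _ ≤ ((Finset.univ : Finset (Fin n)).image inr).card := Finset.card_le_card this
      _ ≤ (Finset.univ : Finset (Fin n)).card := Finset.card_image_le
      _ = n := by simp
  cases u with
  | inl x =>
    rw [ncard_filter_list'] at hu2
    have : (P.toFinset.filter (fun w => inl x ∈ (completeBipartiteGraph (Fin m) (Fin n)).neighborSet w))
        = P.toFinset.filter (fun w => ¬ w.isLeft) := by
      apply Finset.filter_congr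
      intro w _
      simp [completeBipartiteGraph, Sum.not_isLeft]
    rw [this] at hu2
    omega
  | inr y =>
    rw [ncard_filter_list'] at hu2
    have : (P.toFinset.filter (fun w => inr y ∈ (completeBipartiteGraph (Fin m) (Fin n)).neighborSet w))
        = P.toFinset.filter (fun w => w.isLeft) := by
      apply Finset.filter_congr
      intro w _
      simp [completeBipartiteGraph]
    rw [this] at hu2
    omega

open Sum in
private lemma kLGrundy_lower (m n k : ℕ) (hk : 1 ≤ k) (hkn : k ≤ n) (hnm : n ≤ m) :
    ∃ S : List (Fin m ⊕ Fin n),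
      IsGrundySeq k (closedNbhd (completeBipartiteGraph (Fin m) (Fin n)))
        (completeBipartiteGraph (Fin m) (Fin n)).neighborSet S ∧ S.length = m + k := by
  classical
  set A : List (Fin m ⊕ Fin n) := (List.finRange m).map inl with hA
  set B : List (Fin m ⊕ Fin n) := ((List.finRange n).take k).map inr with hB
  have hAlen : A.length = m := by simp [hA]
  have hBlen : B.length = k := by simp [hB]; omega
  have hlen : (A ++ B).length = m + k := by simp [hAlen, hBlen]
  refine ⟨A ++ B, ⟨?_, ?_⟩, hlen⟩
  · rw [List.nodup_append]
    refine ⟨?_, ?_, ?_⟩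
    · exact (List.nodup_finRange m).map inl_injective
    · exact (((List.nodup_finRange n).sublist (List.take_sublist _ _)).map inr_injective)
    · intro a ha _ hb rfl
      simp only [hA, List.mem_map] at ha
      simp only [hB, List.mem_map] at hb
      obtain ⟨x, _, rfl⟩ := ha
      obtain ⟨y, _, hy⟩ := hb
      exact absurd hy (by simp)
  · intro i hi0
    have hi : i < m + k := hlen ▸ hi0
    rw [List.get_eq_getElem]
    by_cases him : i < m
    · -- the i-th entry is in A; take u = the vertex itself
      have htake : (A ++ B).take i = A.take i := by
        rw [List.take_append]
        have : i - A.length = 0 := by omega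
        simp [this]
      have hgetA : (A ++ B)[i]'hi0 = A[i]'(by omega) :=
        List.getElem_append_left (by omega)
      refine ⟨(A ++ B)[i]'hi0, Set.mem_insert _ _, ?_⟩
      have hempty : {w | w ∈ (A ++ B).take i ∧
          (A ++ B)[i]'hi0 ∈ (completeBipartiteGraph (Fin m) (Fin n)).neighborSet w} = ∅ := by
        ext w
        simp only [Set.mem_setOf_eq, Set.mem_empty_iff_false, iff_false, not_and]
        intro hw
        have hwA : w ∈ A := (List.take_sublist i A).mem (htake ▸ hw)
        obtain ⟨x, _, rfl⟩ := List.mem_map.mp hwA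
        have : (A[i]'(by omega) : Fin m ⊕ Fin n) ∈ A := List.getElem_mem _
        obtain ⟨x', _, hx'⟩ := List.mem_map.mp this
        rw [hgetA, ← hx']
        simp [completeBipartiteGraph]
      rw [hempty]
      simpa using (show 0 < k by omega)
    · -- i ≥ m : vertex is inr, use u = inl 0
      have hm1 : 0 < m := by omega
      refine ⟨inl ⟨0, hm1⟩, ?_, ?_⟩
      · have hgetB : (A ++ B)[i]'hi0 = B[i - m]'(by omega) := by
          have h1 : (A ++ B)[i]'hi0 = B[i - A.length]'(by rw [hAlen, hBlen]; omega) :=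
            List.getElem_append_right (by omega)
          rw [h1]
          simp only [hAlen]
        have : (B[i - m]'(by omega) : Fin m ⊕ Fin n) ∈ B := List.getElem_mem _
        obtain ⟨y, _, hy⟩ := List.mem_map.mp this
        rw [hgetB, ← hy]
        exact Set.mem_insert_of_mem _ (by simp [completeBipartiteGraph])
      · have htake : (A ++ B).take i = A ++ B.take (i - m) := by
          rw [List.take_append]
          congr 1
          · exact List.take_of_length_le (by omega)
          · congr 1; omega
        have hsub : {w | w ∈ (A ++ B).take i ∧
            inl (⟨0, hm1⟩ : Fin m) ∈ (completeBipartiteGraph (Fin m) (Fin n)).neighborSet w}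
            ⊆ ↑(B.take (i - m)).toFinset := by
          rintro w ⟨hw1, hw2⟩
          rw [htake, List.mem_append] at hw1
          simp only [List.coe_toFinset, Set.mem_setOf_eq]
          rcases hw1 with hw1 | hw1
          · exfalso
            obtain ⟨x, _, rfl⟩ := List.mem_map.mp hw1
            simp [completeBipartiteGraph] at hw2
          · exact hw1
        calc {w | w ∈ (A ++ B).take i ∧
                inl (⟨0, hm1⟩ : Fin m) ∈ (completeBipartiteGraph (Fin m) (Fin n)).neighborSet w}.ncard
            ≤ (↑(B.take (i - m)).toFinset : Set _).ncard :=
              Set.ncard_le_ncard hsub (Set.toFinite _)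
          _ = (B.take (i - m)).toFinset.card := Set.ncard_coe_finset _
          _ ≤ (B.take (i - m)).length := (B.take (i-m)).toFinset_card_le
          _ ≤ i - m := by simp
          _ < k := by omega

/-- For `m ≥ n ≥ k ≥ 1`, `γ_gr^{L,k}(K_{m,n}) = m + k`. -/
theorem kLGrundy_completeBipartiteGraph (m n k : ℕ) (hk : 1 ≤ k) (hkn : k ≤ n) (hnm : n ≤ m) :
    kLGrundy (completeBipartiteGraph (Fin m) (Fin n)) k = m + k := by
  unfold kLGrundy grundyVal
  have hmem : m + k ∈ {L | ∃ S : List (Fin m ⊕ Fin n),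
      IsGrundySeq k (closedNbhd (completeBipartiteGraph (Fin m) (Fin n)))
        (completeBipartiteGraph (Fin m) (Fin n)).neighborSet S ∧ S.length = L} :=
    kLGrundy_lower m n k hk hkn hnm
  have hub : ∀ L ∈ {L | ∃ S : List (Fin m ⊕ Fin n),
      IsGrundySeq k (closedNbhd (completeBipartiteGraph (Fin m) (Fin n)))
        (completeBipartiteGraph (Fin m) (Fin n)).neighborSet S ∧ S.length = L}, L ≤ m + k := by
    rintro L ⟨S, hS, rfl⟩
    exact kLGrundy_upper m n k hk hkn hnm S hS
  exact le_antisymm (csSup_le ⟨m + k, hmem⟩ hub) (le_csSup ⟨m + k, hub⟩ hmem)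
end

section
/- Let K_{m,n} be the complete bipartite graph with parts of sizes m and n, where m ≥ n ≥ k ≥ 1. Then the k-Z-Grundy domination number satisfies γ_gr^{Z,k}(K_{m,n}) = 2k if m > k and n ≥ k, and γ_gr^{Z,k}(K_{m,n}) = 2k − 1 if m = n = k. -/
namespace KZAux

lemma ncard_mem_le {V : Type*} [DecidableEq V] (l : List V) (s : Set V) (h : s ⊆ {w | w ∈ l}) :
    s.ncard ≤ l.length := by
  have h1 : s ⊆ ↑l.toFinset := by intro x hx; simp only [List.coe_toFinset]; exact h hx
  calc s.ncard ≤ (↑l.toFinset : Set V).ncard :=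
        Set.ncard_le_ncard h1 (l.toFinset.finite_toSet)
    _ = l.toFinset.card := Set.ncard_coe_finset _
    _ ≤ l.length := l.toFinset_card_le

lemma ncard_mem_eq {V : Type*} [DecidableEq V] (l : List V) (hl : l.Nodup) :
    {w | w ∈ l}.ncard = l.length := by
  have : {w | w ∈ l} = ↑l.toFinset := by ext x; simp
  rw [this, Set.ncard_coe_finset, List.toFinset_card_of_nodup hl]

lemma finite_of_mem_list {V : Type*} (l : List V) (s : Set V) (h : s ⊆ {w | w ∈ l}) :
    s.Finite :=
  Set.Finite.subset l.finite_toSet h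

lemma exists_index_of_lt_countP {V : Type*} (p : V → Bool) :
    ∀ (l : List V) (c : ℕ), c < l.countP p →
      ∃ (i : ℕ) (hi : i < l.length), p (l.get ⟨i, hi⟩) = true ∧ (l.take i).countP p = c := by
  intro l
  induction l with
  | nil => simp
  | cons a t ih =>
    intro c hc
    by_cases hpa : p a = true
    · cases c with
      | zero => exact ⟨0, by simp, by simpa, by simp⟩
      | succ c' =>
        have h' : c' < t.countP p := by
          rw [List.countP_cons] at hc; simp [hpa] at hc; omega
        obtain ⟨i, hi, h1, h2⟩ := ih c' h'
        refine ⟨i + 1, by simpa using Nat.succ_lt_succ hi, by simpa using h1, ?_⟩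
        simp [List.countP_cons, hpa, h2]
    · rw [List.countP_cons] at hc; simp [hpa] at hc
      obtain ⟨i, hi, h1, h2⟩ := ih c hc
      refine ⟨i + 1, by simpa using Nat.succ_lt_succ hi, by simpa using h1, ?_⟩
      simp [List.countP_cons, hpa, h2]

section Bipartite

variable {m n k : ℕ}

local notation "G'" => completeBipartiteGraph (Fin m) (Fin n)

lemma mem_cn (u w : Fin m ⊕ Fin n) :
    u ∈ closedNbhd G' w ↔
      u = w ∨ (w.isLeft = true ∧ u.isRight = true ∨ w.isRight = true ∧ u.isLeft = true) := by
  simp [closedNbhd, SimpleGraph.mem_neighborSet]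

/-- If the `i`-th vertex is a left vertex, the prefix contains fewer than `k` left vertices;
similarly for right. -/
lemma countP_take_lt (S : List (Fin m ⊕ Fin n))
    (hS : IsGrundySeq k (G').neighborSet (closedNbhd G') S)
    (i : ℕ) (hi : i < S.length) :
    ((S.get ⟨i, hi⟩).isLeft = true → (S.take i).countP Sum.isLeft < k) ∧
    ((S.get ⟨i, hi⟩).isRight = true → (S.take i).countP Sum.isRight < k) := by
  obtain ⟨hnd, hcond⟩ := hS
  obtain ⟨u, hu, hcard⟩ := hcond i hi
  rw [SimpleGraph.mem_neighborSet, completeBipartiteGraph_adj] at hu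
  have hndtake : (S.take i).Nodup := (List.take_sublist i S).nodup hnd
  constructor
  · intro hL
    have hur : u.isRight = true := by
      rcases hu with ⟨_, h⟩ | ⟨h, _⟩
      · exact h
      · cases hget : S.get ⟨i, hi⟩ <;> rw [hget] at hL h <;> simp_all
    refine lt_of_le_of_lt ?_ hcard
    have hsub : {w | w ∈ (S.take i).filter Sum.isLeft} ⊆
        {w | w ∈ S.take i ∧ u ∈ closedNbhd G' w} := by
      intro w hw
      rw [Set.mem_setOf_eq, List.mem_filter] at hw
      exact ⟨hw.1, (mem_cn u w).2 (Or.inr (Or.inl ⟨hw.2, hur⟩))⟩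
    calc (S.take i).countP Sum.isLeft = ((S.take i).filter Sum.isLeft).length :=
          List.countP_eq_length_filter
      _ = {w | w ∈ (S.take i).filter Sum.isLeft}.ncard :=
          (ncard_mem_eq _ (hndtake.filter _)).symm
      _ ≤ _ := Set.ncard_le_ncard hsub (finite_of_mem_list (S.take i) _ (fun w hw => hw.1))
  · intro hR
    have hul : u.isLeft = true := by
      rcases hu with ⟨h, _⟩ | ⟨_, h⟩
      · cases hget : S.get ⟨i, hi⟩ <;> rw [hget] at hR h <;> simp_all
      · exact h
    refine lt_of_le_of_lt ?_ hcard
    have hsub : {w | w ∈ (S.take i).filter Sum.isRight} ⊆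
        {w | w ∈ S.take i ∧ u ∈ closedNbhd G' w} := by
      intro w hw
      rw [Set.mem_setOf_eq, List.mem_filter] at hw
      exact ⟨hw.1, (mem_cn u w).2 (Or.inr (Or.inr ⟨hw.2, hul⟩))⟩
    calc (S.take i).countP Sum.isRight = ((S.take i).filter Sum.isRight).length :=
          List.countP_eq_length_filter
      _ = {w | w ∈ (S.take i).filter Sum.isRight}.ncard :=
          (ncard_mem_eq _ (hndtake.filter _)).symm
      _ ≤ _ := Set.ncard_le_ncard hsub (finite_of_mem_list (S.take i) _ (fun w hw => hw.1))

lemma countP_isLeft_le (S : List (Fin m ⊕ Fin n))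
    (hS : IsGrundySeq k (G').neighborSet (closedNbhd G') S) :
    S.countP Sum.isLeft ≤ k := by
  by_contra h
  push_neg at h
  obtain ⟨i, hi, h1, h2⟩ := exists_index_of_lt_countP Sum.isLeft S k h
  have := (countP_take_lt S hS i hi).1 h1
  omega

lemma countP_isRight_le (S : List (Fin m ⊕ Fin n))
    (hS : IsGrundySeq k (G').neighborSet (closedNbhd G') S) :
    S.countP Sum.isRight ≤ k := by
  by_contra h
  push_neg at h
  obtain ⟨i, hi, h1, h2⟩ := exists_index_of_lt_countP Sum.isRight S k h
  have := (countP_take_lt S hS i hi).2 h1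
  omega

lemma length_split (S : List (Fin m ⊕ Fin n)) :
    S.length = S.countP Sum.isLeft + S.countP Sum.isRight := by
  have h := List.length_eq_countP_add_countP Sum.isLeft (l := S)
  have h2 : S.countP (fun a => decide ¬a.isLeft = true) = S.countP Sum.isRight := by
    apply List.countP_congr
    intro x _
    cases x <;> simp
  omega

lemma length_le (S : List (Fin m ⊕ Fin n))
    (hS : IsGrundySeq k (G').neighborSet (closedNbhd G') S) :
    S.length ≤ 2 * k := by
  have h1 := countP_isLeft_le S hS
  have h2 := countP_isRight_le S hS
  have h3 := length_split S
  omega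

lemma all_right_mem (P : List (Fin m ⊕ Fin n)) (hP : P.Nodup)
    (hc : n ≤ P.countP Sum.isRight) (u : Fin m ⊕ Fin n) (hu : u.isRight = true) : u ∈ P := by
  have hcard : n ≤ (P.filter Sum.isRight).toFinset.card := by
    rw [List.toFinset_card_of_nodup (hP.filter _), ← List.countP_eq_length_filter]
    exact hc
  have hsub : (P.filter Sum.isRight).toFinset ⊆
      Finset.univ.image (Sum.inr : Fin n → Fin m ⊕ Fin n) := by
    intro x hx
    rw [List.mem_toFinset, List.mem_filter] at hx
    obtain ⟨b, rfl⟩ := Sum.isRight_iff.mp hx.2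
    exact Finset.mem_image_of_mem _ (Finset.mem_univ b)
  have himg : (Finset.univ.image (Sum.inr : Fin n → Fin m ⊕ Fin n)).card = n := by
    rw [Finset.card_image_of_injective _ Sum.inr_injective, Finset.card_univ, Fintype.card_fin]
  have heq : (P.filter Sum.isRight).toFinset =
      Finset.univ.image (Sum.inr : Fin n → Fin m ⊕ Fin n) :=
    Finset.eq_of_subset_of_card_le hsub (by omega)
  obtain ⟨b, rfl⟩ := Sum.isRight_iff.mp hu
  have hmem : Sum.inr b ∈ (P.filter Sum.isRight).toFinset := by
    rw [heq]; exact Finset.mem_image_of_mem _ (Finset.mem_univ b)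
  rw [List.mem_toFinset, List.mem_filter] at hmem
  exact hmem.1

lemma all_left_mem (P : List (Fin m ⊕ Fin n)) (hP : P.Nodup)
    (hc : m ≤ P.countP Sum.isLeft) (u : Fin m ⊕ Fin n) (hu : u.isLeft = true) : u ∈ P := by
  have hcard : m ≤ (P.filter Sum.isLeft).toFinset.card := by
    rw [List.toFinset_card_of_nodup (hP.filter _), ← List.countP_eq_length_filter]
    exact hc
  have hsub : (P.filter Sum.isLeft).toFinset ⊆
      Finset.univ.image (Sum.inl : Fin m → Fin m ⊕ Fin n) := by
    intro x hx
    rw [List.mem_toFinset, List.mem_filter] at hx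
    obtain ⟨a, rfl⟩ := Sum.isLeft_iff.mp hx.2
    exact Finset.mem_image_of_mem _ (Finset.mem_univ a)
  have himg : (Finset.univ.image (Sum.inl : Fin m → Fin m ⊕ Fin n)).card = m := by
    rw [Finset.card_image_of_injective _ Sum.inl_injective, Finset.card_univ, Fintype.card_fin]
  have heq : (P.filter Sum.isLeft).toFinset =
      Finset.univ.image (Sum.inl : Fin m → Fin m ⊕ Fin n) :=
    Finset.eq_of_subset_of_card_le hsub (by omega)
  obtain ⟨a, rfl⟩ := Sum.isLeft_iff.mp hu
  have hmem : Sum.inl a ∈ (P.filter Sum.isLeft).toFinset := by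
    rw [heq]; exact Finset.mem_image_of_mem _ (Finset.mem_univ a)
  rw [List.mem_toFinset, List.mem_filter] at hmem
  exact hmem.1

lemma no_full (hk : 1 ≤ k) (hm : m = k) (hn : n = k) (S : List (Fin m ⊕ Fin n))
    (hS : IsGrundySeq k (G').neighborSet (closedNbhd G') S) (hlen : S.length = 2 * k) :
    False := by
  have hL := countP_isLeft_le S hS
  have hR := countP_isRight_le S hS
  have hsplit := length_split S
  have hi : 2 * k - 1 < S.length := by omega
  have hdrop : S.drop (2 * k - 1) = [S.get ⟨2 * k - 1, hi⟩] := by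
    rw [List.drop_eq_getElem_cons hi, List.drop_eq_nil_of_le (by omega)]
    rfl
  have hdecomp : S = S.take (2 * k - 1) ++ [S.get ⟨2 * k - 1, hi⟩] := by
    rw [← hdrop, List.take_append_drop]
  have hPnd : (S.take (2 * k - 1)).Nodup := (List.take_sublist _ S).nodup hS.1
  have hcountL : S.countP Sum.isLeft =
      (S.take (2 * k - 1)).countP Sum.isLeft + List.countP Sum.isLeft [S.get ⟨2 * k - 1, hi⟩] := by
    conv_lhs => rw [hdecomp]
    rw [List.countP_append]
  have hcountR : S.countP Sum.isRight =
      (S.take (2 * k - 1)).countP Sum.isRight +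
        List.countP Sum.isRight [S.get ⟨2 * k - 1, hi⟩] := by
    conv_lhs => rw [hdecomp]
    rw [List.countP_append]
  obtain ⟨u, hu, hcard⟩ := hS.2 (2 * k - 1) hi
  rw [SimpleGraph.mem_neighborSet, completeBipartiteGraph_adj] at hu
  cases hget : S.get ⟨2 * k - 1, hi⟩ with
  | inl a =>
    -- the footprinted vertex u is a right vertex
    have hur : u.isRight = true := by
      rw [hget] at hu
      rcases hu with ⟨_, h⟩ | ⟨h, _⟩
      · exact h
      · simp at h
    rw [hget] at hcountL hcountR
    simp only [List.countP_cons, List.countP_nil] at hcountL hcountR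
    simp only [Sum.isLeft_inl, Sum.isRight_inl] at hcountL hcountR
    norm_num at hcountL hcountR
    -- so take has k-1 lefts, k rights
    have hPL : (S.take (2 * k - 1)).countP Sum.isLeft = k - 1 := by omega
    have hPR : (S.take (2 * k - 1)).countP Sum.isRight = k := by omega
    have huP : u ∈ S.take (2 * k - 1) :=
      all_right_mem _ hPnd (by omega) u hur
    set s := {w | w ∈ S.take (2 * k - 1) ∧ u ∈ closedNbhd G' w} with hs
    have hfin : s.Finite := finite_of_mem_list (S.take (2 * k - 1)) _ (fun w hw => hw.1)
    have hsub : insert u {w | w ∈ (S.take (2 * k - 1)).filter Sum.isLeft} ⊆ s := by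
      intro w hw
      rcases hw with rfl | hw
      · exact ⟨huP, (mem_cn w w).2 (Or.inl rfl)⟩
      · rw [Set.mem_setOf_eq, List.mem_filter] at hw
        exact ⟨hw.1, (mem_cn u w).2 (Or.inr (Or.inl ⟨hw.2, hur⟩))⟩
    have hnotmem : u ∉ {w | w ∈ (S.take (2 * k - 1)).filter Sum.isLeft} := by
      intro h
      rw [Set.mem_setOf_eq, List.mem_filter] at h
      obtain ⟨b, rfl⟩ := Sum.isRight_iff.mp hur
      simp at h
    have hins : (insert u {w | w ∈ (S.take (2 * k - 1)).filter Sum.isLeft}).ncard =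
        (k - 1) + 1 := by
      rw [Set.ncard_insert_of_notMem hnotmem
        (finite_of_mem_list _ _ (fun w hw => hw)),
        ncard_mem_eq _ (hPnd.filter _), ← List.countP_eq_length_filter, hPL]
    have hge : (k - 1) + 1 ≤ s.ncard := by
      rw [← hins]
      exact Set.ncard_le_ncard hsub hfin
    omega
  | inr b =>
    have hul : u.isLeft = true := by
      rw [hget] at hu
      rcases hu with ⟨h, _⟩ | ⟨_, h⟩
      · simp at h
      · exact h
    rw [hget] at hcountL hcountR
    simp only [List.countP_cons, List.countP_nil] at hcountL hcountR
    simp only [Sum.isLeft_inr, Sum.isRight_inr] at hcountL hcountR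
    norm_num at hcountL hcountR
    have hPR : (S.take (2 * k - 1)).countP Sum.isRight = k - 1 := by omega
    have hPL : (S.take (2 * k - 1)).countP Sum.isLeft = k := by omega
    have huP : u ∈ S.take (2 * k - 1) :=
      all_left_mem _ hPnd (by omega) u hul
    set s := {w | w ∈ S.take (2 * k - 1) ∧ u ∈ closedNbhd G' w} with hs
    have hfin : s.Finite := finite_of_mem_list (S.take (2 * k - 1)) _ (fun w hw => hw.1)
    have hsub : insert u {w | w ∈ (S.take (2 * k - 1)).filter Sum.isRight} ⊆ s := by
      intro w hw
      rcases hw with rfl | hw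
      · exact ⟨huP, (mem_cn w w).2 (Or.inl rfl)⟩
      · rw [Set.mem_setOf_eq, List.mem_filter] at hw
        exact ⟨hw.1, (mem_cn u w).2 (Or.inr (Or.inr ⟨hw.2, hul⟩))⟩
    have hnotmem : u ∉ {w | w ∈ (S.take (2 * k - 1)).filter Sum.isRight} := by
      intro h
      rw [Set.mem_setOf_eq, List.mem_filter] at h
      obtain ⟨a, rfl⟩ := Sum.isLeft_iff.mp hul
      simp at h
    have hins : (insert u {w | w ∈ (S.take (2 * k - 1)).filter Sum.isRight}).ncard =
        (k - 1) + 1 := by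
      rw [Set.ncard_insert_of_notMem hnotmem
        (finite_of_mem_list _ _ (fun w hw => hw)),
        ncard_mem_eq _ (hPnd.filter _), ← List.countP_eq_length_filter, hPR]
    have hge : (k - 1) + 1 ≤ s.ncard := by
      rw [← hins]
      exact Set.ncard_le_ncard hsub hfin
    omega

end Bipartite

end KZAux

namespace KZAux

section Construct

variable {m n k : ℕ}

local notation "G'" => completeBipartiteGraph (Fin m) (Fin n)

/-- `k` left vertices. -/
def Lseq (hkm : k ≤ m) : List (Fin m ⊕ Fin n) :=
  (List.finRange k).map (fun j => Sum.inl (Fin.castLE hkm j))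

/-- the first `r` of `k` right vertices. -/
def Rseq (hkn : k ≤ n) (r : ℕ) : List (Fin m ⊕ Fin n) :=
  ((List.finRange k).map (fun j => Sum.inr (Fin.castLE hkn j))).take r

lemma Lseq_length (hkm : k ≤ m) : (Lseq (n := n) hkm).length = k := by
  simp [Lseq]

lemma Rseq_length (hkn : k ≤ n) (r : ℕ) (hr : r ≤ k) : (Rseq (m := m) hkn r).length = r := by
  simp [Rseq]; omega

lemma Lseq_nodup (hkm : k ≤ m) : (Lseq (n := n) hkm).Nodup :=
  (List.nodup_finRange k).map (Sum.inl_injective.comp (Fin.castLE_injective hkm))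

lemma Rseq_nodup (hkn : k ≤ n) (r : ℕ) : (Rseq (m := m) hkn r).Nodup :=
  (List.take_sublist _ _).nodup
    ((List.nodup_finRange k).map (Sum.inr_injective.comp (Fin.castLE_injective hkn)))

lemma Lseq_mem (hkm : k ≤ m) {w : Fin m ⊕ Fin n} (hw : w ∈ Lseq (n := n) hkm) :
    ∃ j : Fin k, w = Sum.inl (Fin.castLE hkm j) := by
  rw [Lseq, List.mem_map] at hw
  obtain ⟨j, _, rfl⟩ := hw
  exact ⟨j, rfl⟩

lemma Rseq_mem (hkn : k ≤ n) (r : ℕ) {w : Fin m ⊕ Fin n} (hw : w ∈ Rseq (m := m) hkn r) :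
    ∃ j : Fin k, w = Sum.inr (Fin.castLE hkn j) := by
  have := (List.take_sublist r _).mem hw
  rw [List.mem_map] at this
  obtain ⟨j, _, rfl⟩ := this
  exact ⟨j, rfl⟩

lemma construct_nodup (hkm : k ≤ m) (hkn : k ≤ n) (r : ℕ) :
    (Lseq (n := n) hkm ++ Rseq hkn r).Nodup := by
  refine (Lseq_nodup hkm).append (Rseq_nodup hkn r) ?_
  intro w hwL hwR
  obtain ⟨j, rfl⟩ := Lseq_mem hkm hwL
  obtain ⟨j', h⟩ := Rseq_mem hkn r hwR
  simp at h

lemma construct_grundy (hk : 1 ≤ k) (hkm : k ≤ m) (hkn : k ≤ n) (r : ℕ) (hr : r ≤ k)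
    (hesc : k < m ∨ r < k) :
    IsGrundySeq k (G').neighborSet (closedNbhd G') (Lseq (n := n) hkm ++ Rseq hkn r) := by
  refine ⟨construct_nodup hkm hkn r, ?_⟩
  intro i hi
  have hlenL : (Lseq (n := n) hkm).length = k := Lseq_length hkm
  have hlenR : (Rseq (m := m) hkn r).length = r := Rseq_length hkn r hr
  have hi' : i < k + r := by rw [List.length_append, hlenL, hlenR] at hi; exact hi
  by_cases hik : i < k
  · -- a left vertex is played; footprint a fresh right vertex
    have hgetmem : (Lseq (n := n) hkm ++ Rseq hkn r).get ⟨i, hi⟩ ∈ Lseq (n := n) hkm := by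
      rw [List.get_eq_getElem, List.getElem_append_left (by show i < _; omega)]
      exact List.getElem_mem _
    obtain ⟨j, hj⟩ := Lseq_mem hkm hgetmem
    refine ⟨Sum.inr ⟨0, by omega⟩, ?_, ?_⟩
    · rw [SimpleGraph.mem_neighborSet, completeBipartiteGraph_adj, hj]; simp
    · refine lt_of_le_of_lt (ncard_mem_le ((Lseq (n := n) hkm ++ Rseq hkn r).take i) _ ?_) ?_
      · rintro w ⟨hw1, _⟩
        exact hw1
      · rw [List.length_take, List.length_append, hlenL, hlenR]
        omega
  · -- a right vertex is played
    push_neg at hik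
    have hgetmem : (Lseq (n := n) hkm ++ Rseq hkn r).get ⟨i, hi⟩ ∈ Rseq hkn r := by
      rw [List.get_eq_getElem, List.getElem_append_right (by show _ ≤ (i : ℕ); omega)]
      exact List.getElem_mem _
    obtain ⟨j, hj⟩ := Rseq_mem hkn r hgetmem
    have htake : (Lseq (n := n) hkm ++ Rseq hkn r).take i =
        Lseq (n := n) hkm ++ (Rseq hkn r).take (i - k) := by
      rw [List.take_append, List.take_of_length_le (by omega), hlenL]
    obtain hm' | hr' := hesc
    · -- m > k : footprint the left vertex with index k, not in the sequence
      refine ⟨Sum.inl ⟨k, hm'⟩, ?_, ?_⟩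
      · rw [SimpleGraph.mem_neighborSet, completeBipartiteGraph_adj, hj]; simp
      · refine lt_of_le_of_lt (ncard_mem_le ((Rseq (m := m) hkn r).take (i - k)) _ ?_) ?_
        · rintro w ⟨hw1, hw2⟩
          rw [htake, List.mem_append] at hw1
          rcases hw1 with hw1 | hw1
          · exfalso
            obtain ⟨j', rfl⟩ := Lseq_mem hkm hw1
            rw [mem_cn] at hw2
            rcases hw2 with h | h
            · simp only [Sum.inl.injEq, Fin.ext_iff, Fin.coe_castLE] at h
              have := j'.isLt
              omega
            · simp at h
          · exact hw1
        · rw [List.length_take, hlenR]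
          omega
    · -- r < k : footprint the left vertex with index 0 (it is in the sequence)
      refine ⟨Sum.inl ⟨0, by omega⟩, ?_, ?_⟩
      · rw [SimpleGraph.mem_neighborSet, completeBipartiteGraph_adj, hj]; simp
      · refine lt_of_le_of_lt (ncard_mem_le
          (Sum.inl ⟨0, by omega⟩ :: (Rseq (m := m) hkn r).take (i - k)) _ ?_) ?_
        · rintro w ⟨hw1, hw2⟩
          rw [htake, List.mem_append] at hw1
          rcases hw1 with hw1 | hw1
          · obtain ⟨j', rfl⟩ := Lseq_mem hkm hw1
            rw [mem_cn] at hw2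
            rcases hw2 with h | h
            · exact List.mem_cons.mpr (Or.inl h.symm)
            · exfalso; simp at h
          · exact List.mem_cons_of_mem _ hw1
        · rw [List.length_cons, List.length_take, hlenR]
          omega

lemma construct_length (hkm : k ≤ m) (hkn : k ≤ n) (r : ℕ) (hr : r ≤ k) :
    (Lseq (n := n) hkm ++ Rseq hkn r).length = k + r := by
  rw [List.length_append, Lseq_length, Rseq_length hkn r hr]

end Construct

end KZAux

open KZAux in
/-- For `m ≥ n ≥ k ≥ 1`, `γ_gr^{Z,k}(K_{m,n}) = 2k` if `m > k`, and
`γ_gr^{Z,k}(K_{m,n}) = 2k - 1` if `m = n = k`. -/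
theorem kZGrundy_completeBipartiteGraph (m n k : ℕ) (hk : 1 ≤ k) (hkn : k ≤ n) (hnm : n ≤ m) :
    (k < m → kZGrundy (completeBipartiteGraph (Fin m) (Fin n)) k = 2 * k) ∧
      (m = k ∧ n = k → kZGrundy (completeBipartiteGraph (Fin m) (Fin n)) k = 2 * k - 1) := by
  have hkm : k ≤ m := le_trans hkn hnm
  have hbdd : BddAbove {p | ∃ S : List (Fin m ⊕ Fin n),
      IsGrundySeq k (completeBipartiteGraph (Fin m) (Fin n)).neighborSet
        (closedNbhd (completeBipartiteGraph (Fin m) (Fin n))) S ∧ S.length = p} := by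
    refine ⟨2 * k, ?_⟩
    rintro x ⟨S, hS, rfl⟩
    exact length_le S hS
  constructor
  · intro hmk
    rw [kZGrundy, grundyVal]
    apply le_antisymm
    · apply csSup_le
      · exact ⟨0, [], ⟨List.nodup_nil, fun i hi => by simp at hi⟩, rfl⟩
      · rintro x ⟨S, hS, rfl⟩
        exact length_le S hS
    · apply le_csSup hbdd
      refine ⟨Lseq (n := n) hkm ++ Rseq hkn k,
        construct_grundy hk hkm hkn k le_rfl (Or.inl hmk), ?_⟩
      rw [construct_length hkm hkn k le_rfl]
      omega
  · rintro ⟨hm, hn⟩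
    rw [kZGrundy, grundyVal]
    apply le_antisymm
    · apply csSup_le
      · exact ⟨0, [], ⟨List.nodup_nil, fun i hi => by simp at hi⟩, rfl⟩
      · rintro x ⟨S, hS, rfl⟩
        have h1 := length_le S hS
        have h2 : S.length ≠ 2 * k := fun h => no_full hk hm hn S hS h
        omega
    · apply le_csSup hbdd
      refine ⟨Lseq (n := n) hkm ++ Rseq hkn (k - 1),
        construct_grundy hk hkm hkn (k - 1) (by omega) (Or.inr (by omega)), ?_⟩
      rw [construct_length hkm hkn (k - 1) (by omega)]
      omega
end

section
/- Let K_{m,n} be the complete bipartite graph with parts of sizes m and n, where m ≥ n ≥ k ≥ 1. Then the k-t-Grundy domination number satisfies γ_gr^{t,k}(K_{m,n}) = 2k. -/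
lemma ncard_mem_filter_eq {α : Type*} [DecidableEq α] (l : List α) (hl : l.Nodup) (p : α → Bool) :
    {w | w ∈ l ∧ p w}.ncard = (l.filter p).length := by
  have h : {w | w ∈ l ∧ p w} = ((l.filter p).toFinset : Set α) := by
    ext x; simp [List.mem_filter]
  rw [h, Set.ncard_coe_finset, List.toFinset_card_of_nodup (hl.filter p)]

lemma countP_le_of_forall {α : Type*} (p : α → Bool) (k : ℕ) (S : List α)
    (h : ∀ i (hi : i < S.length), p S[i] = true → (S.take i).countP p < k) :
    S.countP p ≤ k := by
  induction S using List.reverseRecOn with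
  | nil => simp
  | append_singleton T a ih =>
    have hT : T.countP p ≤ k := by
      refine ih fun i hi hp => ?_
      have hi' : i < (T ++ [a]).length := by simp; omega
      have h1 : (T ++ [a])[i] = T[i] := List.getElem_append_left hi
      have h2 : (T ++ [a]).take i = T.take i := List.take_append_of_le_length hi.le
      have := h i hi' (by rw [h1]; exact hp)
      rwa [h2] at this
    rcases hpa : p a with _ | _
    · simp [List.countP_append, hpa]; omega
    · have hi' : T.length < (T ++ [a]).length := by simp
      have h1 : (T ++ [a])[T.length] = a := by simp
      have h2 : (T ++ [a]).take T.length = T := by simp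
      have := h T.length hi' (by rw [h1]; exact hpa)
      rw [h2] at this
      simp [List.countP_append, hpa]; omega


/-- For `m ≥ n ≥ k ≥ 1`, `γ_gr^{t,k}(K_{m,n}) = 2k`. -/
theorem ktGrundy_completeBipartiteGraph (m n k : ℕ) (hk : 1 ≤ k) (hkn : k ≤ n) (hnm : n ≤ m) :
    ktGrundy (completeBipartiteGraph (Fin m) (Fin n)) k = 2 * k := by
  classical
  have hkm : k ≤ m := hkn.trans hnm
  have hn0 : 0 < n := hk.trans hkn
  have hm0 : 0 < m := hk.trans hkm
  set G := completeBipartiteGraph (Fin m) (Fin n) with hG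
  -- upper bound
  have hub : ∀ S : List (Fin m ⊕ Fin n),
      IsGrundySeq k G.neighborSet G.neighborSet S → S.length ≤ 2 * k := by
    intro S hS
    have hL : S.countP Sum.isLeft ≤ k := by
      apply countP_le_of_forall
      intro i hi hp
      obtain ⟨u, hu, hcard⟩ := hS.2 i hi
      obtain ⟨a, ha⟩ := Sum.isLeft_iff.mp hp
      rw [List.get_eq_getElem, ha] at hu
      have hadj : G.Adj (Sum.inl a) u := hu
      rw [hG, completeBipartiteGraph_adj] at hadj
      obtain ⟨b, hb⟩ : ∃ b, u = Sum.inr b := by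
        rcases hadj with ⟨_, h⟩ | ⟨h, _⟩
        · exact Sum.isRight_iff.mp h
        · simp at h
      have hset : {w | w ∈ S.take i ∧ u ∈ G.neighborSet w} =
          {w | w ∈ S.take i ∧ Sum.isLeft w = true} := by
        ext w
        simp only [Set.mem_setOf_eq, SimpleGraph.mem_neighborSet, hG,
          completeBipartiteGraph_adj, hb]
        constructor
        · rintro ⟨h1, ⟨h2, _⟩ | ⟨_, h2⟩⟩
          · exact ⟨h1, h2⟩
          · simp at h2
        · rintro ⟨h1, h2⟩; exact ⟨h1, Or.inl ⟨h2, rfl⟩⟩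
      rw [hset, ncard_mem_filter_eq _ (hS.1.sublist (List.take_sublist i S)) _,
        ← List.countP_eq_length_filter] at hcard
      exact hcard
    have hR : S.countP Sum.isRight ≤ k := by
      apply countP_le_of_forall
      intro i hi hp
      obtain ⟨u, hu, hcard⟩ := hS.2 i hi
      obtain ⟨b, hb⟩ := Sum.isRight_iff.mp hp
      rw [List.get_eq_getElem, hb] at hu
      have hadj : G.Adj (Sum.inr b) u := hu
      rw [hG, completeBipartiteGraph_adj] at hadj
      obtain ⟨a, ha⟩ : ∃ a, u = Sum.inl a := by
        rcases hadj with ⟨h, _⟩ | ⟨_, h⟩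
        · simp at h
        · exact Sum.isLeft_iff.mp h
      have hset : {w | w ∈ S.take i ∧ u ∈ G.neighborSet w} =
          {w | w ∈ S.take i ∧ Sum.isRight w = true} := by
        ext w
        simp only [Set.mem_setOf_eq, SimpleGraph.mem_neighborSet, hG,
          completeBipartiteGraph_adj, ha]
        constructor
        · rintro ⟨h1, ⟨_, h2⟩ | ⟨h2, _⟩⟩
          · simp at h2
          · exact ⟨h1, h2⟩
        · rintro ⟨h1, h2⟩; exact ⟨h1, Or.inr ⟨h2, rfl⟩⟩
      rw [hset, ncard_mem_filter_eq _ (hS.1.sublist (List.take_sublist i S)) _,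
        ← List.countP_eq_length_filter] at hcard
      exact hcard
    have hlen : S.length = S.countP Sum.isLeft + S.countP Sum.isRight := by
      rw [List.length_eq_countP_add_countP Sum.isLeft (l := S)]
      congr 1
      apply List.countP_congr
      intro x _
      cases x <;> simp
    omega
  -- witness sequence
  set A : List (Fin m ⊕ Fin n) := List.ofFn (fun j : Fin k => Sum.inl (Fin.castLE hkm j)) with hA
  set B : List (Fin m ⊕ Fin n) := List.ofFn (fun j : Fin k => Sum.inr (Fin.castLE hkn j)) with hB
  have hAlen : A.length = k := by simp [hA]
  have hBlen : B.length = k := by simp [hB]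
  have hlen₀ : (A ++ B).length = 2 * k := by simp [hA, hB]; ring
  have hAL : ∀ w ∈ A, Sum.isLeft w = true := by
    intro w hw; simp only [hA, List.mem_ofFn] at hw; obtain ⟨j, rfl⟩ := hw; rfl
  have hBR : ∀ w ∈ B, Sum.isRight w = true := by
    intro w hw; simp only [hB, List.mem_ofFn] at hw; obtain ⟨j, rfl⟩ := hw; rfl
  have hnodup : (A ++ B).Nodup := by
    refine List.Nodup.append ?_ ?_ ?_
    · rw [hA]
      exact List.nodup_ofFn.mpr (Sum.inl_injective.comp (Fin.castLE_injective hkm))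
    · rw [hB]
      exact List.nodup_ofFn.mpr (Sum.inr_injective.comp (Fin.castLE_injective hkn))
    · intro x hx hy
      have := hAL x hx
      have := hBR x hy
      cases x <;> simp_all
  have hgr : IsGrundySeq k G.neighborSet G.neighborSet (A ++ B) := by
    refine ⟨hnodup, fun i hi => ?_⟩
    rw [hlen₀] at hi
    by_cases hik : i < k
    · refine ⟨Sum.inr ⟨0, hn0⟩, ?_, ?_⟩
      · have hik' : i < A.length := by omega
        have hget : (A ++ B).get ⟨i, by rw [hlen₀]; omega⟩ = A[i]'hik' :=
          List.getElem_append_left hik'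
        have hval : A[i]'hik' = Sum.inl (Fin.castLE hkm ⟨i, hik⟩) := by
          simp [hA]
        rw [SimpleGraph.mem_neighborSet, hget, hval, hG, completeBipartiteGraph_adj]
        simp
      · calc {w | w ∈ (A ++ B).take i ∧ (Sum.inr ⟨0, hn0⟩ : Fin m ⊕ Fin n) ∈ G.neighborSet w}.ncard
            ≤ (((A ++ B).take i).toFinset : Set (Fin m ⊕ Fin n)).ncard := by
              apply Set.ncard_le_ncard
              · intro w hw; simp only [Set.mem_setOf_eq] at hw
                simp [List.mem_toFinset, hw.1]
              · exact ((A ++ B).take i).toFinset.finite_toSet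
          _ ≤ ((A ++ B).take i).length := by
              rw [Set.ncard_coe_finset]; exact List.toFinset_card_le _
          _ ≤ i := by rw [List.length_take]; omega
          _ < k := hik
    · refine ⟨Sum.inl ⟨0, hm0⟩, ?_, ?_⟩
      · have hik' : i - A.length < B.length := by omega
        have hget : (A ++ B).get ⟨i, by rw [hlen₀]; omega⟩ = B[i - A.length]'hik' :=
          List.getElem_append_right (by omega)
        have hval : B[i - A.length]'hik' = Sum.inr (Fin.castLE hkn ⟨i - A.length, by omega⟩) := by
          simp [hB]
        rw [SimpleGraph.mem_neighborSet, hget, hval, hG, completeBipartiteGraph_adj]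
        simp
      · have hset : {w | w ∈ (A ++ B).take i ∧ (Sum.inl ⟨0, hm0⟩ : Fin m ⊕ Fin n) ∈ G.neighborSet w} =
            {w | w ∈ (A ++ B).take i ∧ Sum.isRight w = true} := by
          ext w
          simp only [Set.mem_setOf_eq, SimpleGraph.mem_neighborSet, hG,
            completeBipartiteGraph_adj]
          constructor
          · rintro ⟨h1, ⟨_, h2⟩ | ⟨h2, _⟩⟩
            · simp at h2
            · exact ⟨h1, h2⟩
          · rintro ⟨h1, h2⟩; exact ⟨h1, Or.inr ⟨h2, rfl⟩⟩
        rw [hset, ncard_mem_filter_eq _ (hnodup.sublist (List.take_sublist i (A ++ B))) _]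
        have htake : (A ++ B).take i = A ++ B.take (i - k) := by
          have hi' : i = A.length + (i - k) := by omega
          conv_lhs => rw [hi']
          rw [List.take_append]
          simp
        rw [htake, List.filter_append]
        have hfA : A.filter Sum.isRight = [] := by
          rw [List.filter_eq_nil_iff]
          intro w hw
          have := hAL w hw
          cases w <;> simp_all
        rw [hfA]
        calc ([] ++ (B.take (i - k)).filter Sum.isRight).length
            ≤ (B.take (i - k)).length := by
              simpa using List.length_filter_le Sum.isRight (B.take (i - k))
          _ ≤ i - k := by rw [List.length_take]; omega
          _ < k := by omega
  -- combine
  rw [ktGrundy, grundyVal]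
  apply le_antisymm
  · apply csSup_le
    · exact ⟨2 * k, A ++ B, hgr, hlen₀⟩
    · rintro x ⟨S, hS, rfl⟩
      exact hub S hS
  · apply le_csSup
    · refine ⟨2 * k, ?_⟩
      rintro x ⟨S, hS, rfl⟩
      exact hub S hS
    · exact ⟨A ++ B, hgr, hlen₀⟩
end

section
/- Let Q_d be the d-dimensional hypercube graph with d ≥ 2, and let k be an integer with 1 ≤ k ≤ d. Then γ_gr^{L,k}(Q_d) ≥ ⌈2^d − 2^{d−(k+1)}⌉; equivalently, γ_gr^{L,k}(Q_d) ≥ 2^d − 2^{d−k−1} when k < d, and γ_gr^{L,d}(Q_d) = 2^d. -/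
/-- The `d`-dimensional hypercube: vertices are 0-1 sequences of length `d`, adjacent iff
they differ in exactly one position. -/
def hypercubeGraph (d : ℕ) : SimpleGraph (Fin d → Bool) where
  Adj x y := (Finset.univ.filter fun i => x i ≠ y i).card = 1
  symm := by
    constructor
    intro x y h
    simpa [ne_comm] using h
  loopless := by
    constructor
    intro x h
    simp at h

namespace GrundyHelpers

variable {d : ℕ}

/-- Flip coordinate `c` of a vertex of the hypercube. -/
def flp (c : Fin d) (v : Fin d → Bool) : Fin d → Bool := Function.update v c (!v c)

@[simp] lemma flip_apply_self (c : Fin d) (v : Fin d → Bool) : flp c v c = !v c :=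
  Function.update_self _ _ _

lemma flip_apply_ne (c : Fin d) (v : Fin d → Bool) {e : Fin d} (h : e ≠ c) :
    flp c v e = v e := Function.update_of_ne h _ _

@[simp] lemma flip_flip (c : Fin d) (v : Fin d → Bool) : flp c (flp c v) = v := by
  funext e
  by_cases h : e = c
  · subst h; simp
  · rw [flip_apply_ne _ _ h, flip_apply_ne _ _ h]

lemma hypercube_adj_iff {x y : Fin d → Bool} :
    (hypercubeGraph d).Adj x y ↔ ∃ c, y = flp c x := by
  show (Finset.univ.filter fun i => x i ≠ y i).card = 1 ↔ _
  constructor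
  · intro h
    obtain ⟨c, hc⟩ := Finset.card_eq_one.mp h
    have hmem : ∀ e, x e ≠ y e ↔ e = c := by
      intro e
      rw [← Finset.mem_singleton, ← hc, Finset.mem_filter]
      simp
    refine ⟨c, funext fun e => ?_⟩
    by_cases he : e = c
    · subst he
      have h1 : x e ≠ y e := (hmem e).mpr rfl
      rw [flip_apply_self]
      cases hx : x e <;> cases hy : y e <;> simp_all
    · have h1 : x e = y e := not_not.mp (fun hne => he ((hmem e).mp hne))
      rw [flip_apply_ne _ _ he, h1]
  · rintro ⟨c, rfl⟩
    rw [Finset.card_eq_one]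
    refine ⟨c, ?_⟩
    ext e
    rw [Finset.mem_filter, Finset.mem_singleton]
    by_cases he : e = c
    · subst he; simp
    · rw [flip_apply_ne _ _ he]; simp [he]

lemma adj_symm_flip {x y : Fin d → Bool} (h : (hypercubeGraph d).Adj x y) :
    ∃ c, x = flp c y := hypercube_adj_iff.mp h.symm

/-- Any Grundy sequence has length at most the number of vertices. -/
lemma grundy_length_le {V : Type*} [Fintype V] {k : ℕ} {N₁ N₂ : V → Set V} {S : List V}
    (h : IsGrundySeq k N₁ N₂ S) : S.length ≤ Fintype.card V :=
  h.1.length_le_card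

lemma grundyVal_le {V : Type*} [Fintype V] (k : ℕ) (N₁ N₂ : V → Set V) :
    grundyVal k N₁ N₂ ≤ Fintype.card V := by
  apply csSup_le
  · exact ⟨0, ⟨[], ⟨List.nodup_nil, fun i hi => by simp at hi⟩, rfl⟩⟩
  · rintro m ⟨S, hS, rfl⟩
    exact grundy_length_le hS

/-- Master lemma: build a Grundy sequence out of a finset `A` with a rank function and
a footprint assignment. -/
lemma master {V : Type*} [Fintype V] [DecidableEq V] (k : ℕ) (N₁ N₂ : V → Set V)
    (A : Finset V) (ρ : V → ℕ) (f : V → V)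
    (h1 : ∀ v ∈ A, f v ∈ N₁ v)
    (h2 : ∀ v ∈ A, ∃ T : Finset V, T.card < k ∧
      ∀ w ∈ A, f v ∈ N₂ w → w ≠ v → ρ w ≤ ρ v → w ∈ T) :
    A.card ≤ grundyVal k N₁ N₂ := by
  classical
  set r : V → V → Prop := fun a b => ρ a ≤ ρ b with hr
  haveI : IsTotal V r := ⟨fun a b => le_total _ _⟩
  haveI : IsTrans V r := ⟨fun a b c => le_trans⟩
  set S : List V := A.toList.insertionSort r with hS
  have hperm : S.Perm A.toList := List.perm_insertionSort r _
  have hsorted : S.Pairwise r := List.pairwise_insertionSort r _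
  have hnodup : S.Nodup := hperm.nodup_iff.mpr A.nodup_toList
  have hmemA : ∀ w ∈ S, w ∈ A := fun w hw => Finset.mem_toList.mp (hperm.mem_iff.mp hw)
  have hlen : S.length = A.card := by rw [hperm.length_eq, Finset.length_toList]
  have hgr : IsGrundySeq k N₁ N₂ S := by
    refine ⟨hnodup, fun i hi => ?_⟩
    set v := S.get ⟨i, hi⟩ with hv
    have hvA : v ∈ A := hmemA v (S.get_mem ⟨i, hi⟩)
    obtain ⟨T, hTk, hT⟩ := h2 v hvA
    refine ⟨f v, h1 v hvA, ?_⟩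
    have hsub : {w | w ∈ S.take i ∧ f v ∈ N₂ w} ⊆ (T : Set V) := by
      rintro w ⟨hw1, hw2⟩
      obtain ⟨⟨j, hj⟩, hwj⟩ := List.mem_iff_get.mp hw1
      have hji : j < i := by
        have := hj
        simp only [List.length_take, lt_min_iff] at this
        exact this.1
      have hjS : j < S.length := lt_trans hji hi
      have hwg : S.get ⟨j, hjS⟩ = w := by
        rw [← hwj]
        simp [List.getElem_take]
      have hne : w ≠ v := by
        rw [← hwg, hv]
        intro hcon
        have := (hnodup.get_inj_iff).mp hcon
        simp only [Fin.mk.injEq] at this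
        omega
      have hle : ρ w ≤ ρ v := by
        rw [← hwg, hv]
        exact hsorted.rel_get_of_lt (by simp [Fin.lt_def]; omega)
      exact hT w (hmemA w (List.mem_of_mem_take hw1)) hw2 hne hle
    calc {w | w ∈ S.take i ∧ f v ∈ N₂ w}.ncard ≤ (T : Set V).ncard :=
          Set.ncard_le_ncard hsub T.finite_toSet
      _ = T.card := Set.ncard_coe_finset T
      _ < k := hTk
  have hbdd : BddAbove {m | ∃ S : List V, IsGrundySeq k N₁ N₂ S ∧ S.length = m} := by
    refine ⟨Fintype.card V, ?_⟩
    rintro m ⟨S', hS', rfl⟩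
    exact grundy_length_le hS'
  calc A.card = S.length := hlen.symm
    _ ≤ grundyVal k N₁ N₂ := le_csSup hbdd ⟨S, hgr, rfl⟩

end GrundyHelpers
namespace GrundyHelpers

open Classical in
/-- Weight of the suffix (coordinates `≥ K`). -/
noncomputable def wt (K : ℕ) (v : Fin d → Bool) : ℕ :=
  (Finset.univ.filter fun c : Fin d => K ≤ (c : ℕ) ∧ v c = true).card

/-- Prefix (coordinates `< K`) all true. -/
def pf (K : ℕ) (v : Fin d → Bool) : Prop := ∀ c : Fin d, (c : ℕ) < K → v c = true

open Classical in
/-- The least prefix coordinate where `v` is false, or `d` if there is none. -/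
noncomputable def jv (K : ℕ) (v : Fin d → Bool) : ℕ :=
  if h : ∃ m : ℕ, ∃ hm : m < d, m < K ∧ v ⟨m, hm⟩ = false then Nat.find h else d

/-- The rank (block index) of a vertex. -/
noncomputable def rk (K : ℕ) (v : Fin d → Bool) : ℕ :=
  if jv K v < d then jv K v else if wt K v % 2 = 0 then K else K + 1

/-- The footprint of a vertex. -/
noncomputable def fp (K : ℕ) (hK : K < d) (v : Fin d → Bool) : Fin d → Bool :=
  if h : jv K v < d then flp ⟨jv K v, h⟩ v
  else if wt K v % 2 = 0 then v else flp ⟨K, hK⟩ v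

lemma jv_spec {K : ℕ} {v : Fin d → Bool} (h : ¬ pf K v) (hKd : K ≤ d) :
    ∃ hj : jv K v < d, jv K v < K ∧ v ⟨jv K v, hj⟩ = false ∧
      ∀ m (hm : m < d), m < jv K v → m < K → v ⟨m, hm⟩ = true := by
  classical
  have hex : ∃ m : ℕ, ∃ hm : m < d, m < K ∧ v ⟨m, hm⟩ = false := by
    simp only [pf, not_forall] at h
    obtain ⟨c, hcK, hcf⟩ := h
    exact ⟨(c : ℕ), c.isLt, hcK, by simpa [Bool.not_eq_true] using hcf⟩
  rw [jv, dif_pos hex]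
  obtain ⟨hm, hmK, hmf⟩ := Nat.find_spec hex
  refine ⟨hm, hmK, hmf, ?_⟩
  intro m hm' hlt hmK'
  by_contra hcon
  exact Nat.find_min hex hlt ⟨hm', hmK', by simpa [Bool.not_eq_true] using hcon⟩

lemma jv_eq_d {K : ℕ} {v : Fin d → Bool} (h : pf K v) : jv K v = d := by
  classical
  rw [jv, dif_neg]
  rintro ⟨m, hm, hmK, hmf⟩
  have := h ⟨m, hm⟩ hmK
  simp [this] at hmf

lemma jv_lt_d_iff {K : ℕ} {v : Fin d → Bool} (hKd : K ≤ d) (hd : 0 < d) :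
    jv K v < d ↔ ¬ pf K v := by
  constructor
  · intro h hpf
    rw [jv_eq_d hpf] at h
    omega
  · intro h
    exact (jv_spec h hKd).1

lemma wt_flip_parity {K : ℕ} {c : Fin d} (hc : K ≤ (c : ℕ)) (v : Fin d → Bool) :
    wt K (flp c v) % 2 ≠ wt K v % 2 := by
  classical
  set s : Finset (Fin d) := Finset.univ.filter fun e : Fin d => K ≤ (e : ℕ) ∧ v e = true with hs
  have hfilter : (Finset.univ.filter fun e : Fin d => K ≤ (e : ℕ) ∧ flp c v e = true) =
      if v c = true then s.erase c else insert c s := by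
    ext e
    by_cases he : e = c
    · subst he
      cases hvc : v e <;> simp [hs, flip_apply_self, hvc, hc]
    · rw [Finset.mem_filter, flip_apply_ne _ _ he]
      cases hvc : v c <;> simp [hs, hvc, he, Finset.mem_filter]
  have hwt : wt K (flp c v) = if v c = true then wt K v - 1 else wt K v + 1 := by
    rw [wt, hfilter]
    by_cases hvc : v c = true
    · rw [if_pos hvc, if_pos hvc, Finset.card_erase_of_mem]
      · rfl
      · simp [hs, hc, hvc]
    · rw [if_neg hvc, if_neg hvc, Finset.card_insert_of_notMem]
      · rfl
      · simp [hs, hvc]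
  by_cases hvc : v c = true
  · have hpos : 1 ≤ wt K v := by
      rw [wt]
      refine Finset.card_pos.mpr ⟨c, ?_⟩
      simp [hc, hvc]
    rw [hwt, if_pos hvc]
    omega
  · rw [hwt, if_neg hvc]
    omega

end GrundyHelpers

open GrundyHelpers in
/-- For `d ≥ 2` and `1 ≤ k ≤ d`, `γ_gr^{L,k}(Q_d) ≥ ⌈2^d - 2^{d-(k+1)}⌉`: when `k < d` this
says `γ_gr^{L,k}(Q_d) ≥ 2^d - 2^{d-k-1}`, and when `k = d` it says `γ_gr^{L,d}(Q_d) = 2^d`. -/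
theorem kLGrundy_hypercube_lower_bound (d k : ℕ) (hd : 2 ≤ d) (hk : 1 ≤ k) (hkd : k ≤ d) :
    (k < d → 2 ^ d - 2 ^ (d - k - 1) ≤ kLGrundy (hypercubeGraph d) k) ∧
      kLGrundy (hypercubeGraph d) d = 2 ^ d := by
  classical
  have hcard : Fintype.card (Fin d → Bool) = 2 ^ d := by simp [Fintype.card_fun]
  constructor
  · -- Part 1 : k < d
    intro hkd'
    set K := k - 1 with hKdef
    have hKd : K < d := by omega
    have hK1d : K + 1 < d := by omega
    set E : Finset (Fin d → Bool) :=
      Finset.univ.filter (fun v => pf K v ∧ v ⟨K, hKd⟩ = false ∧ wt K v % 2 = 1) with hE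
    set A : Finset (Fin d → Bool) := Finset.univ \ E with hA
    have hEcard : E.card ≤ 2 ^ (d - k - 1) := by
      set φ : (Fin d → Bool) → (Fin (d - k - 1) → Bool) :=
        fun v i => v ⟨K + 1 + (i : ℕ), by have := i.isLt; omega⟩ with hφ
      have hinj : Set.InjOn φ (E : Set (Fin d → Bool)) := by
        intro v hv w hw heq
        simp only [hE, Finset.coe_filter, Set.mem_setOf_eq, Finset.mem_univ, true_and] at hv hw
        obtain ⟨hvpf, hvcK, hvpar⟩ := hv
        obtain ⟨hwpf, hwcK, hwpar⟩ := hw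
        have hag : ∀ c : Fin d, (c : ℕ) ≠ d - 1 → v c = w c := by
          intro c hc
          rcases lt_trichotomy ((c : ℕ)) K with h1 | h1 | h1
          · rw [hvpf c h1, hwpf c h1]
          · have hcc : c = ⟨K, hKd⟩ := Fin.ext h1
            rw [hcc, hvcK, hwcK]
          · have hi : (c : ℕ) - (K + 1) < d - k - 1 := by have := c.isLt; omega
            have hcc : (⟨K + 1 + ((c : ℕ) - (K + 1)), by have := c.isLt; omega⟩ : Fin d) = c := by
              apply Fin.ext; simp; omega
            rw [← hcc]
            exact congrFun heq ⟨(c : ℕ) - (K + 1), hi⟩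
        have hd1 : d - 1 < d := by omega
        by_cases hlast : v ⟨d - 1, hd1⟩ = w ⟨d - 1, hd1⟩
        · funext c
          by_cases hc : (c : ℕ) = d - 1
          · have hcc : c = ⟨d - 1, hd1⟩ := Fin.ext hc
            rw [hcc]; exact hlast
          · exact hag c hc
        · exfalso
          have hw_eq : w = flp ⟨d - 1, hd1⟩ v := by
            funext e
            by_cases he : e = ⟨d - 1, hd1⟩
            · rw [he, flip_apply_self]
              cases h1 : v ⟨d - 1, hd1⟩ <;> cases h2 : w ⟨d - 1, hd1⟩ <;> simp_all
            · rw [flip_apply_ne _ _ he]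
              exact (hag e (fun hv' => he (Fin.ext hv'))).symm
          have hpar := wt_flip_parity (K := K) (c := ⟨d - 1, hd1⟩)
            (show K ≤ ((⟨d - 1, hd1⟩ : Fin d) : ℕ) by simp; omega) v
          rw [← hw_eq] at hpar
          rw [hvpar, hwpar] at hpar
          exact hpar rfl
      have := Finset.card_le_card_of_injOn (t := (Finset.univ : Finset (Fin (d - k - 1) → Bool)))
        φ (fun v _ => Finset.mem_univ _) hinj
      calc E.card ≤ (Finset.univ : Finset (Fin (d - k - 1) → Bool)).card := this
        _ = 2 ^ (d - k - 1) := by rw [Finset.card_univ]; simp [Fintype.card_fun]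
    have hmain : A.card ≤ kLGrundy (hypercubeGraph d) k := by
      rw [kLGrundy]
      apply master k (closedNbhd (hypercubeGraph d)) ((hypercubeGraph d).neighborSet)
        A (rk K) (fp K hKd)
      · -- h1
        intro v _
        unfold fp
        split_ifs with h1 h2
        · exact Set.mem_insert_of_mem _
            ((SimpleGraph.mem_neighborSet _ _ _).mpr (hypercube_adj_iff.mpr ⟨_, rfl⟩))
        · exact Set.mem_insert _ _
        · exact Set.mem_insert_of_mem _
            ((SimpleGraph.mem_neighborSet _ _ _).mpr (hypercube_adj_iff.mpr ⟨_, rfl⟩))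
      · -- h2
        intro v hvA
        refine ⟨(Finset.univ.filter fun c : Fin d => (c : ℕ) < K).image
          (fun c => flp c (fp K hKd v)), ?_, ?_⟩
        · calc ((Finset.univ.filter fun c : Fin d => (c : ℕ) < K).image
              (fun c => flp c (fp K hKd v))).card
              ≤ (Finset.univ.filter fun c : Fin d => (c : ℕ) < K).card := Finset.card_image_le
            _ ≤ (Finset.range K).card := Finset.card_le_card_of_injOn (fun c => (c : ℕ))
                (fun c hc => Finset.mem_range.mpr (Finset.mem_filter.mp hc).2)
                (fun a _ b _ h => Fin.ext h)
            _ = K := Finset.card_range K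
            _ < k := by omega
        · intro w hwA hw2 hwv hrk
          rw [SimpleGraph.mem_neighborSet] at hw2
          obtain ⟨c, hc⟩ := hypercube_adj_iff.mp hw2
          have hwc : w = flp c (fp K hKd v) := by rw [hc, GrundyHelpers.flip_flip]
          rcases lt_or_ge ((c : ℕ)) K with hcK | hcK
          · exact Finset.mem_image.mpr
              ⟨c, Finset.mem_filter.mpr ⟨Finset.mem_univ _, hcK⟩, hwc.symm⟩
          exfalso
          have hvA' : v ∉ E := (Finset.mem_sdiff.mp hvA).2
          have hwA' : w ∉ E := (Finset.mem_sdiff.mp hwA).2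
          -- helper : if w is not prefix-true and u is true on all prefix coords ≤ jv K w, contra
          by_cases hvpf : pf K v
          · have hjvd : jv K v = d := jv_eq_d hvpf
            by_cases hvpar : wt K v % 2 = 0
            · -- even block : u = v, rank K
              have hrkv : rk K v = K := by
                unfold rk; rw [if_neg (by omega), if_pos hvpar]
              have huv : fp K hKd v = v := by
                unfold fp; rw [dif_neg (by omega), if_pos hvpar]
              by_cases hwpf : pf K w
              · have hpar := wt_flip_parity (K := K) (c := c) hcK (fp K hKd v)
                rw [← hwc, huv] at hpar
                have hwjd : jv K w = d := jv_eq_d hwpf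
                have hrkw : rk K w = K + 1 := by
                  unfold rk; rw [if_neg (by omega), if_neg (by omega)]
                rw [hrkw, hrkv] at hrk; omega
              · obtain ⟨hjw, hjwK, hjwf, _⟩ := jv_spec hwpf (le_of_lt hKd)
                have hne : (⟨jv K w, hjw⟩ : Fin d) ≠ c := by
                  intro h; have := congrArg Fin.val h; simp at this; omega
                have h1 := congrFun hwc ⟨jv K w, hjw⟩
                rw [flip_apply_ne _ _ hne, huv, hjwf, hvpf _ hjwK] at h1
                simp at h1
            · -- odd block : u = flp cK v, rank K + 1
              have hrkv : rk K v = K + 1 := by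
                unfold rk; rw [if_neg (by omega), if_neg hvpar]
              have huv : fp K hKd v = flp ⟨K, hKd⟩ v := by
                unfold fp; rw [dif_neg (by omega), if_neg hvpar]
              have hvcK : v ⟨K, hKd⟩ = true := by
                by_contra hcon
                apply hvA'
                rw [hE, Finset.mem_filter]
                exact ⟨Finset.mem_univ _, hvpf, by simpa using hcon, by omega⟩
              by_cases hwpf : pf K w
              · have hparu := wt_flip_parity (K := K) (c := ⟨K, hKd⟩)
                  (show K ≤ ((⟨K, hKd⟩ : Fin d) : ℕ) by simp) v
                rw [← huv] at hparu
                have hupar : wt K (fp K hKd v) % 2 = 0 := by omega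
                have hparw := wt_flip_parity (K := K) (c := c) hcK (fp K hKd v)
                rw [← hwc] at hparw
                have hwpar : wt K w % 2 = 1 := by omega
                have hwcK : w ⟨K, hKd⟩ = true := by
                  by_contra hcon
                  exact hwA' (Finset.mem_filter.mpr
                    ⟨Finset.mem_univ _, hwpf, by simpa using hcon, hwpar⟩)
                have hucK : fp K hKd v ⟨K, hKd⟩ = false := by
                  rw [huv, flip_apply_self, hvcK]; rfl
                by_cases hccK : c = ⟨K, hKd⟩
                · apply hwv
                  rw [hwc, hccK, huv, GrundyHelpers.flip_flip]
                · have h1 := congrFun hwc ⟨K, hKd⟩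
                  rw [flip_apply_ne _ _ (Ne.symm hccK), hucK, hwcK] at h1
                  simp at h1
              · obtain ⟨hjw, hjwK, hjwf, _⟩ := jv_spec hwpf (le_of_lt hKd)
                have hne : (⟨jv K w, hjw⟩ : Fin d) ≠ c := by
                  intro h; have := congrArg Fin.val h; simp at this; omega
                have hnecK : (⟨jv K w, hjw⟩ : Fin d) ≠ ⟨K, hKd⟩ := by
                  intro h; have := congrArg Fin.val h; simp at this; omega
                have h1 := congrFun hwc ⟨jv K w, hjw⟩
                rw [flip_apply_ne _ _ hne, huv, flip_apply_ne _ _ hnecK, hjwf,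
                  hvpf _ hjwK] at h1
                simp at h1
          · -- v pure block
            obtain ⟨hj, hjK, hjf, hjmin⟩ := jv_spec hvpf (le_of_lt hKd)
            have hrkv : rk K v = jv K v := by unfold rk; rw [if_pos hj]
            have huv : fp K hKd v = flp ⟨jv K v, hj⟩ v := by
              unfold fp; rw [dif_pos hj]
            have hrkw : rk K w < K := by rw [hrkv] at hrk; omega
            have hwpf : ¬ pf K w := by
              intro hpw
              have hwjd : jv K w = d := jv_eq_d hpw
              unfold rk at hrkw
              rw [if_neg (by omega)] at hrkw
              split_ifs at hrkw <;> omega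
            obtain ⟨hjw, hjwK, hjwf, _⟩ := jv_spec hwpf (le_of_lt hKd)
            have hrkw' : rk K w = jv K w := by unfold rk; rw [if_pos hjw]
            have hjwle : jv K w ≤ jv K v := by rw [hrkv] at hrk; rw [hrkw'] at hrk; omega
            have hne : (⟨jv K w, hjw⟩ : Fin d) ≠ c := by
              intro h; have := congrArg Fin.val h; simp at this; omega
            have h2 : fp K hKd v ⟨jv K w, hjw⟩ = true := by
              rw [huv]
              rcases eq_or_lt_of_le hjwle with heq | hlt
              · have hcc : (⟨jv K w, hjw⟩ : Fin d) = ⟨jv K v, hj⟩ := Fin.ext heq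
                rw [hcc, flip_apply_self, hjf]
                rfl
              · rw [flip_apply_ne _ _ (by
                  intro h; have := congrArg Fin.val h; simp at this; omega)]
                exact hjmin _ hjw hlt hjwK
            have h1 := congrFun hwc ⟨jv K w, hjw⟩
            rw [flip_apply_ne _ _ hne, h2, hjwf] at h1
            simp at h1
    have hAcard : 2 ^ d - 2 ^ (d - k - 1) ≤ A.card := by
      rw [hA, Finset.card_sdiff_of_subset (Finset.subset_univ E), Finset.card_univ, hcard]
      omega
    omega
  · -- Part 2 : k = d
    have hub : kLGrundy (hypercubeGraph d) d ≤ 2 ^ d := by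
      rw [kLGrundy, ← hcard]
      exact grundyVal_le _ _ _
    have hlb : 2 ^ d ≤ kLGrundy (hypercubeGraph d) d := by
      have hmain : (Finset.univ : Finset (Fin d → Bool)).card ≤
          kLGrundy (hypercubeGraph d) d := by
        rw [kLGrundy]
        apply master d (closedNbhd (hypercubeGraph d)) ((hypercubeGraph d).neighborSet)
          Finset.univ (fun _ => 0) (flp ⟨0, by omega⟩)
        · intro v _
          exact Set.mem_insert_of_mem _
            ((SimpleGraph.mem_neighborSet _ _ _).mpr (hypercube_adj_iff.mpr ⟨_, rfl⟩))
        · intro v _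
          refine ⟨(({(⟨0, by omega⟩ : Fin d)}ᶜ : Finset (Fin d)).image
            (fun c => flp c (flp ⟨0, by omega⟩ v))), ?_, ?_⟩
          · calc _ ≤ ({(⟨0, by omega⟩ : Fin d)}ᶜ : Finset (Fin d)).card :=
                Finset.card_image_le
              _ = d - 1 := by rw [Finset.card_compl]; simp
              _ < d := by omega
          · intro w _ hw2 hwv _
            rw [SimpleGraph.mem_neighborSet] at hw2
            obtain ⟨c, hc⟩ := adj_symm_flip hw2
            have hcz : c ≠ ⟨0, by omega⟩ := by
              rintro rfl
              exact hwv (by rw [hc, GrundyHelpers.flip_flip])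
            exact Finset.mem_image.mpr ⟨c, by simpa using hcz, hc.symm⟩
      rwa [Finset.card_univ, hcard] at hmain
    omega
end

section
/- Let Q_d be the d-dimensional hypercube graph with d > 2. Then γ_gr^{L,d−1}(Q_d) = 2^d − 1 and γ_gr^{L,d−2}(Q_d) = 2^d − 2. -/
namespace HCaux

/-- top bit of a nonzero number is set -/
lemma testBit_log {x : ℕ} (hx : x ≠ 0) : x.testBit (Nat.log 2 x) = true := by
  have h1 : 2 ^ Nat.log 2 x ≤ x := Nat.pow_log_le_self 2 hx
  have h2 : x < 2 ^ (Nat.log 2 x + 1) := Nat.lt_pow_succ_log_self (by norm_num) x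
  rw [Nat.testBit_eq_decide_div_mod_eq]
  have hpos : 0 < 2 ^ Nat.log 2 x := by positivity
  have : x / 2 ^ Nat.log 2 x = 1 := by
    have hlo : 1 ≤ x / 2 ^ Nat.log 2 x := (Nat.one_le_div_iff hpos).2 h1
    have hhi : x / 2 ^ Nat.log 2 x < 2 := by
      rw [Nat.div_lt_iff_lt_mul hpos]
      calc x < 2 ^ (Nat.log 2 x + 1) := h2
        _ = 2 * 2 ^ Nat.log 2 x := by ring
    omega
  simp [this]

lemma flip_lt {v t : ℕ} (h : v.testBit t = true) : v ^^^ 2 ^ t < v := by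
  apply Nat.lt_of_testBit t
  · simp [Nat.testBit_xor, h, Nat.testBit_two_pow]
  · exact h
  · intro j hj
    simp [Nat.testBit_xor, Nat.testBit_two_pow_of_ne (by omega : t ≠ j)]

lemma flip_gt {v t : ℕ} (h : v.testBit t = false) : v < v ^^^ 2 ^ t := by
  apply Nat.lt_of_testBit t h
  · simp [Nat.testBit_xor, h, Nat.testBit_two_pow]
  · intro j hj
    simp [Nat.testBit_xor, Nat.testBit_two_pow_of_ne (by omega : t ≠ j)]

lemma testBit_two_pow_add' {b x i : ℕ} (hx : x < 2 ^ b) :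
    (2 ^ b + x).testBit i = if i = b then true else x.testBit i := by
  rcases lt_trichotomy i b with h | h | h
  · rw [Nat.testBit_two_pow_add_gt h, if_neg (by omega)]
  · subst h
    rw [Nat.testBit_two_pow_add_eq, Nat.testBit_lt_two_pow hx]
    simp
  · have h1 : 2 ^ b + x < 2 ^ i := by
      calc 2 ^ b + x < 2 ^ b + 2 ^ b := by omega
        _ = 2 ^ (b + 1) := by ring
        _ ≤ 2 ^ i := Nat.pow_le_pow_right (by norm_num) (by omega)
    rw [Nat.testBit_lt_two_pow h1, Nat.testBit_lt_two_pow (by omega), if_neg (by omega)]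

lemma xor_two_pow_two_pow' {a b : ℕ} (h : b < a) : 2 ^ a ^^^ 2 ^ b = 2 ^ a + 2 ^ b := by
  have hx : 2 ^ b < 2 ^ a := Nat.pow_lt_pow_right (by norm_num) h
  apply Nat.eq_of_testBit_eq
  intro i
  rw [testBit_two_pow_add' hx]
  simp only [Nat.testBit_xor, Nat.testBit_two_pow]
  by_cases h1 : i = a
  · subst h1
    rw [decide_eq_false (by omega : ¬ b = i), decide_eq_true rfl, if_pos rfl]
    decide
  · by_cases h2 : i = b
    · subst h2
      simp [if_neg h1, decide_eq_false (by omega : ¬ a = i)]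
    · simp [if_neg h1, decide_eq_false (by omega : ¬ a = i), decide_eq_false (by omega : ¬ b = i)]

lemma xor_two_pow_two_pow {a b : ℕ} (h : a ≠ b) : 2 ^ a ^^^ 2 ^ b = 2 ^ a + 2 ^ b := by
  rcases Nat.lt_or_ge b a with hab | hab
  · exact xor_two_pow_two_pow' hab
  · have hab' : a < b := by omega
    rw [Nat.xor_comm, xor_two_pow_two_pow' hab', Nat.add_comm]


/-- vertex of the hypercube encoded by the binary representation of `n` -/
def vtx (d n : ℕ) : Fin d → Bool := fun i => n.testBit i

lemma vtx_injOn {d : ℕ} {a b : ℕ} (ha : a < 2 ^ d) (hb : b < 2 ^ d)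
    (h : vtx d a = vtx d b) : a = b := by
  apply Nat.eq_of_testBit_eq
  intro i
  rcases Nat.lt_or_ge i d with hi | hi
  · exact congrFun h ⟨i, hi⟩
  · rw [Nat.testBit_lt_two_pow (lt_of_lt_of_le ha (Nat.pow_le_pow_right (by norm_num) hi)),
      Nat.testBit_lt_two_pow (lt_of_lt_of_le hb (Nat.pow_le_pow_right (by norm_num) hi))]

lemma adj_vtx {d : ℕ} {a b : ℕ} (ha : a < 2 ^ d) (hb : b < 2 ^ d) :
    (hypercubeGraph d).Adj (vtx d a) (vtx d b) ↔ ∃ t, t < d ∧ a ^^^ b = 2 ^ t := by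
  have hc : a ^^^ b < 2 ^ d := Nat.xor_lt_two_pow ha hb
  have hfil : (Finset.univ.filter fun i : Fin d => vtx d a i ≠ vtx d b i)
      = Finset.univ.filter fun i : Fin d => (a ^^^ b).testBit i = true := by
    apply Finset.filter_congr
    intro i _
    simp only [vtx, Nat.testBit_xor, eq_iff_iff]
    cases hta : a.testBit i <;> cases htb : b.testBit i <;> simp
  show (Finset.univ.filter fun i : Fin d => vtx d a i ≠ vtx d b i).card = 1 ↔ _
  rw [hfil]
  constructor
  · intro h1
    obtain ⟨i₀, hi₀⟩ := Finset.card_eq_one.1 h1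
    refine ⟨i₀, i₀.2, ?_⟩
    apply Nat.eq_of_testBit_eq
    intro t
    rcases Nat.lt_or_ge t d with ht | ht
    · have : (⟨t, ht⟩ : Fin d) ∈ Finset.univ.filter (fun i : Fin d => (a ^^^ b).testBit i = true)
          ↔ (⟨t, ht⟩ : Fin d) ∈ ({i₀} : Finset (Fin d)) := by rw [hi₀]
      simp only [Finset.mem_filter, Finset.mem_univ, true_and, Finset.mem_singleton] at this
      by_cases hti : (⟨t, ht⟩ : Fin d) = i₀
      · rw [this.2 hti, ← hti, Nat.testBit_two_pow]
        simp
      · have hf : (a ^^^ b).testBit t = false := by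
          rcases Bool.eq_false_or_eq_true ((a ^^^ b).testBit t) with h | h
          · exact absurd (this.1 h) hti
          · exact h
        rw [hf, Nat.testBit_two_pow_of_ne]
        intro he
        exact hti (Fin.ext he.symm)
    · rw [Nat.testBit_lt_two_pow (lt_of_lt_of_le hc (Nat.pow_le_pow_right (by norm_num) ht)),
        Nat.testBit_lt_two_pow (lt_of_lt_of_le (Nat.pow_lt_pow_right (by norm_num) i₀.2)
          (Nat.pow_le_pow_right (by norm_num) ht))]
  · rintro ⟨t, htd, hxor⟩
    rw [Finset.card_eq_one]
    refine ⟨⟨t, htd⟩, ?_⟩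
    ext i
    simp only [Finset.mem_filter, Finset.mem_univ, true_and, Finset.mem_singleton, hxor,
      Nat.testBit_two_pow, decide_eq_true_eq, Fin.ext_iff]
    exact eq_comm


/-- flipping coordinate `i` -/
def flip {d : ℕ} (x : Fin d → Bool) (i : Fin d) : Fin d → Bool := Function.update x i (!x i)

lemma adj_iff_flip {d : ℕ} {x y : Fin d → Bool} :
    (hypercubeGraph d).Adj x y ↔ ∃ i, y = flip x i := by
  show (Finset.univ.filter fun i : Fin d => x i ≠ y i).card = 1 ↔ _
  constructor
  · intro h
    obtain ⟨i₀, hi₀⟩ := Finset.card_eq_one.1 h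
    refine ⟨i₀, ?_⟩
    funext j
    by_cases hj : j = i₀
    · subst hj
      have : x j ≠ y j := by
        have : j ∈ Finset.univ.filter fun i : Fin d => x i ≠ y i := by
          rw [hi₀]; exact Finset.mem_singleton_self j
        simpa using this
      simp only [flip, Function.update_self]
      cases hx : x j <;> cases hy : y j <;> simp_all
    · have : ¬ (x j ≠ y j) := by
        intro hne
        have : j ∈ Finset.univ.filter fun i : Fin d => x i ≠ y i := by simpa using hne
        rw [hi₀] at this
        exact hj (Finset.mem_singleton.1 this)
      push_neg at this
      rw [flip, Function.update_of_ne hj, this]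
  · rintro ⟨i, rfl⟩
    rw [Finset.card_eq_one]
    refine ⟨i, ?_⟩
    ext j
    simp only [Finset.mem_filter, Finset.mem_univ, true_and, Finset.mem_singleton]
    by_cases hj : j = i
    · subst hj
      simp only [flip, Function.update_self]
      cases x j <;> simp
    · simp only [flip, Function.update_of_ne hj, hj, iff_false]
      simp

lemma flip_injective {d : ℕ} (x : Fin d → Bool) : Function.Injective (flip x) := by
  intro i j h
  by_contra hne
  have h1 := congrFun h i
  rw [flip, flip, Function.update_self, Function.update_of_ne hne] at h1
  cases x i <;> simp_all

lemma neighborSet_eq {d : ℕ} (x : Fin d → Bool) :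
    (hypercubeGraph d).neighborSet x = Set.range (flip x) := by
  ext y
  simp only [SimpleGraph.mem_neighborSet, Set.mem_range]
  rw [adj_iff_flip]
  exact exists_congr fun i => eq_comm

lemma ncard_neighborSet {d : ℕ} (x : Fin d → Bool) :
    ((hypercubeGraph d).neighborSet x).ncard = d := by
  rw [neighborSet_eq, ← Set.image_univ, Set.ncard_image_of_injective _ (flip_injective x),
    Set.ncard_univ]
  simp

lemma card_V (d : ℕ) : Fintype.card (Fin d → Bool) = 2 ^ d := by
  simp

/-- the key upper bound -/
lemma length_bound {d k : ℕ} {S : List (Fin d → Bool)}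
    (hS : IsGrundySeq k (closedNbhd (hypercubeGraph d)) (hypercubeGraph d).neighborSet S) :
    S.length + d ≤ 2 ^ d + k := by
  obtain ⟨hnd, hstep⟩ := hS
  have hlen : S.length ≤ 2 ^ d := by
    have := List.Nodup.length_le_card hnd
    rwa [card_V] at this
  rcases Nat.eq_zero_or_pos S.length with h0 | hpos
  · have : d < 2 ^ d := Nat.lt_two_pow_self
    omega
  set i := S.length - 1 with hi_def
  have hi : i < S.length := by omega
  obtain ⟨u, _, hcnt⟩ := hstep i hi
  set T : Set (Fin d → Bool) := {w | w ∈ S.take i} with hT_def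
  have hTcard : T.ncard = i := by
    have h1 : T = ((S.take i).toFinset : Set (Fin d → Bool)) := by
      ext w
      simp [hT_def]
    rw [h1, Set.ncard_coe_finset, List.toFinset_card_of_nodup (hnd.sublist (List.take_sublist i S)),
      List.length_take]
    omega
  have hset : {w | w ∈ S.take i ∧ u ∈ (hypercubeGraph d).neighborSet w}
      = (hypercubeGraph d).neighborSet u ∩ T := by
    ext w
    simp only [Set.mem_setOf_eq, Set.mem_inter_iff, SimpleGraph.mem_neighborSet, hT_def]
    rw [(hypercubeGraph d).adj_comm]
    exact and_comm
  rw [hset] at hcnt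
  have hsub : (hypercubeGraph d).neighborSet u ⊆
      ((hypercubeGraph d).neighborSet u ∩ T) ∪ (Set.univ \ T) := by
    intro w hw
    by_cases hwT : w ∈ T
    · exact Or.inl ⟨hw, hwT⟩
    · exact Or.inr ⟨trivial, hwT⟩
  have hd_le : d ≤ ((hypercubeGraph d).neighborSet u ∩ T).ncard + (Set.univ \ T).ncard := by
    calc d = ((hypercubeGraph d).neighborSet u).ncard := (ncard_neighborSet u).symm
      _ ≤ (((hypercubeGraph d).neighborSet u ∩ T) ∪ (Set.univ \ T)).ncard :=
          Set.ncard_le_ncard hsub (Set.toFinite _)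
      _ ≤ _ := Set.ncard_union_le _ _
  have hdiff : (Set.univ \ T).ncard = 2 ^ d - i := by
    rw [Set.ncard_diff (Set.subset_univ T), hTcard, Set.ncard_univ]
    simp
  omega


/-- count of neighbors of `u` in list `p` (as numbers) -/
def cnt (d u : ℕ) (p : List ℕ) : ℕ :=
  ((Finset.range d).filter fun t => u ^^^ 2 ^ t ∈ p).card

/-- the step condition at ℕ-level -/
def StepOK (d k : ℕ) (p : List ℕ) (v : ℕ) : Prop :=
  ∃ u, u < 2 ^ d ∧ (u = v ∨ ∃ t, t < d ∧ u ^^^ v = 2 ^ t) ∧ cnt d u p < k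

lemma stepOK_mono {d k k' : ℕ} {p : List ℕ} {v : ℕ} (h : StepOK d k p v) (hk : k ≤ k') :
    StepOK d k' p v := by
  obtain ⟨u, h1, h2, h3⟩ := h
  exact ⟨u, h1, h2, lt_of_lt_of_le h3 hk⟩

lemma cnt_le {d u a : ℕ} {p : List ℕ} (h : ∀ t, t < a → (u ^^^ 2 ^ t) ∈ p → False) :
    cnt d u p ≤ d - a := by
  have hsub : ((Finset.range d).filter fun t => u ^^^ 2 ^ t ∈ p) ⊆ Finset.Ico a d := by
    intro t ht
    simp only [Finset.mem_filter, Finset.mem_range] at ht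
    rcases Nat.lt_or_ge t a with h1 | h1
    · exact absurd (h t h1 ht.2) not_false
    · exact Finset.mem_Ico.2 ⟨h1, ht.1⟩
  calc cnt d u p ≤ (Finset.Ico a d).card := Finset.card_le_card hsub
    _ = d - a := Nat.card_Ico a d

lemma isGrundySeq_of {d k : ℕ} (l : List ℕ) (hl : ∀ m ∈ l, m < 2 ^ d) (hnd : l.Nodup)
    (hstep : ∀ p v s, l = p ++ v :: s → StepOK d k p v) :
    IsGrundySeq k (closedNbhd (hypercubeGraph d)) (hypercubeGraph d).neighborSet
      (l.map (vtx d)) := by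
  constructor
  · exact List.Nodup.map_on (fun x hx y hy h => vtx_injOn (hl x hx) (hl y hy) h) hnd
  · intro i hi
    rw [List.length_map] at hi
    have hget : (l.map (vtx d)).get ⟨i, by rw [List.length_map]; exact hi⟩
        = vtx d (l.get ⟨i, hi⟩) := by simp
    set v := l.get ⟨i, hi⟩ with hv_def
    have hvl : v ∈ l := List.get_mem l ⟨i, hi⟩
    have hv2d : v < 2 ^ d := hl v hvl
    have hdecomp : l = l.take i ++ v :: l.drop (i + 1) := by
      conv_lhs => rw [← List.take_append_drop i l]
      congr 1
      rw [List.drop_eq_getElem_cons hi]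
      rfl
    obtain ⟨u, hu2d, hadj, hcnt⟩ := hstep _ _ _ hdecomp
    refine ⟨vtx d u, ?_, ?_⟩
    · rcases hadj with rfl | ⟨t, htd, hxor⟩
      · rw [hget]
        exact Set.mem_insert _ _
      · rw [hget]
        apply Set.mem_insert_of_mem
        rw [SimpleGraph.mem_neighborSet, adj_vtx hv2d hu2d]
        exact ⟨t, htd, by rw [Nat.xor_comm]; exact hxor⟩
    · have htake : (l.map (vtx d)).take i = (l.take i).map (vtx d) := by
        rw [List.map_take]
      have hseteq : {w | w ∈ (l.map (vtx d)).take i ∧ vtx d u ∈ (hypercubeGraph d).neighborSet w}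
          = (fun t => vtx d (u ^^^ 2 ^ t)) ''
            {t : ℕ | t < d ∧ (u ^^^ 2 ^ t) ∈ l.take i} := by
        ext w
        simp only [Set.mem_setOf_eq, Set.mem_image, htake, List.mem_map]
        constructor
        · rintro ⟨⟨m, hm, rfl⟩, hadjm⟩
          have hm2d : m < 2 ^ d := hl m (List.mem_of_mem_take hm)
          rw [SimpleGraph.mem_neighborSet, adj_vtx hm2d hu2d] at hadjm
          obtain ⟨t, htd, hxor⟩ := hadjm
          have hmeq : m = u ^^^ 2 ^ t := by
            have : m ^^^ u ^^^ u = 2 ^ t ^^^ u := by rw [hxor]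
            rwa [Nat.xor_assoc, Nat.xor_self, Nat.xor_zero, Nat.xor_comm] at this
          exact ⟨t, ⟨htd, hmeq ▸ hm⟩, by rw [← hmeq]⟩
        · rintro ⟨t, ⟨htd, hmem⟩, rfl⟩
          have hm2d : u ^^^ 2 ^ t < 2 ^ d :=
            Nat.xor_lt_two_pow hu2d (Nat.pow_lt_pow_right (by norm_num) htd)
          refine ⟨⟨u ^^^ 2 ^ t, hmem, rfl⟩, ?_⟩
          rw [SimpleGraph.mem_neighborSet, adj_vtx hm2d hu2d]
          refine ⟨t, htd, ?_⟩
          rw [Nat.xor_comm u, Nat.xor_assoc, Nat.xor_self, Nat.xor_zero]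
      rw [hseteq]
      have hinj : Set.InjOn (fun t => vtx d (u ^^^ 2 ^ t))
          {t : ℕ | t < d ∧ (u ^^^ 2 ^ t) ∈ l.take i} := by
        intro t1 ht1 t2 ht2 heq
        have h1 : u ^^^ 2 ^ t1 < 2 ^ d :=
          Nat.xor_lt_two_pow hu2d (Nat.pow_lt_pow_right (by norm_num) ht1.1)
        have h2 : u ^^^ 2 ^ t2 < 2 ^ d :=
          Nat.xor_lt_two_pow hu2d (Nat.pow_lt_pow_right (by norm_num) ht2.1)
        have := vtx_injOn h1 h2 heq
        have hpow : (2 : ℕ) ^ t1 = 2 ^ t2 := by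
          have h3 : u ^^^ (u ^^^ 2 ^ t1) = u ^^^ (u ^^^ 2 ^ t2) := by rw [this]
          rwa [← Nat.xor_assoc, Nat.xor_self, Nat.zero_xor, ← Nat.xor_assoc, Nat.xor_self,
            Nat.zero_xor] at h3
        exact Nat.pow_right_injective (by norm_num) hpow
      rw [Set.ncard_image_of_injOn hinj]
      have : {t : ℕ | t < d ∧ (u ^^^ 2 ^ t) ∈ l.take i}
          = (((Finset.range d).filter fun t => u ^^^ 2 ^ t ∈ l.take i) : Finset ℕ) := by
        ext t
        simp [Finset.mem_filter]
      rw [this, Set.ncard_coe_finset]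
      exact hcnt

lemma allOK_append {d k : ℕ} {l₁ l₂ : List ℕ}
    (h1 : ∀ p v s, l₁ = p ++ v :: s → StepOK d k p v)
    (h2 : ∀ p v s, l₂ = p ++ v :: s → StepOK d k (l₁ ++ p) v) :
    ∀ p v s, l₁ ++ l₂ = p ++ v :: s → StepOK d k p v := by
  intro p v s h
  rcases List.append_eq_append_iff.mp h with ⟨a, ha1, ha2⟩ | ⟨c, hc1, hc2⟩
  · subst ha1
    exact h2 a v s ha2
  · rcases c with _ | ⟨c0, c⟩
    · rw [List.append_nil] at hc1
      subst hc1
      simp only [List.nil_append] at hc2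
      have := h2 [] v s hc2.symm
      rwa [List.append_nil] at this
    · simp only [List.cons_append] at hc2
      obtain ⟨rfl, rfl⟩ : v = c0 ∧ s = c ++ l₂ :=
        ⟨(List.cons_eq_cons.mp hc2).1, (List.cons_eq_cons.mp hc2).2⟩
      exact h1 p _ c hc1


/-- the descending list `[2^d - 1, ..., 8]` -/
def descL (d : ℕ) : List ℕ := (List.range' 8 (2 ^ d - 8)).reverse

lemma mem_descL {d : ℕ} (hd : 2 < d) {m : ℕ} : m ∈ descL d ↔ 8 ≤ m ∧ m < 2 ^ d := by
  have h8 : 8 ≤ 2 ^ d := by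
    calc (8 : ℕ) = 2 ^ 3 := by norm_num
      _ ≤ 2 ^ d := Nat.pow_le_pow_right (by norm_num) hd
  rw [descL, List.mem_reverse, List.mem_range'_1]
  omega

lemma sorted_descL (d : ℕ) : (descL d).Pairwise (· > ·) := by
  rw [descL, List.pairwise_reverse]
  exact List.pairwise_lt_range'

lemma nodup_descL (d : ℕ) : (descL d).Nodup :=
  (sorted_descL d).imp fun h => Nat.ne_of_gt h

lemma allOK_desc {d : ℕ} (hd : 2 < d) :
    ∀ p v s, descL d = p ++ v :: s → StepOK d (d - 2) p v := by
  intro p v s hsplit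
  have hvmem : v ∈ descL d := by
    rw [hsplit]
    exact List.mem_append_right _ List.mem_cons_self
  obtain ⟨hv8, hv2d⟩ := (mem_descL hd).1 hvmem
  have hpmem : ∀ m, m ∈ p ↔ (v < m ∧ m < 2 ^ d) := by
    have hpw : (p ++ v :: s).Pairwise (· > ·) := hsplit ▸ sorted_descL d
    rw [List.pairwise_append] at hpw
    intro m
    constructor
    · intro hm
      have hm' : m ∈ descL d := by
        rw [hsplit]
        exact List.mem_append_left _ hm
      exact ⟨hpw.2.2 m hm v List.mem_cons_self, ((mem_descL hd).1 hm').2⟩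
    · rintro ⟨hvm, hm2d⟩
      have hm' : m ∈ descL d := (mem_descL hd).2 ⟨by omega, hm2d⟩
      rw [hsplit, List.mem_append, List.mem_cons] at hm'
      rcases hm' with h | h | h
      · exact h
      · omega
      · have := List.rel_of_pairwise_cons hpw.2.1 h
        omega
  -- basic facts about the top bit
  set h := Nat.log 2 v with hh_def
  have hvne : v ≠ 0 := by omega
  have hv_lt : v < 2 ^ (h + 1) := Nat.lt_pow_succ_log_self (by norm_num) v
  have hv_ge : 2 ^ h ≤ v := Nat.pow_log_le_self 2 hvne
  have hh3 : 3 ≤ h := by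
    by_contra hcon
    have : h + 1 ≤ 3 := by omega
    have : (2 : ℕ) ^ (h + 1) ≤ 2 ^ 3 := Nat.pow_le_pow_right (by norm_num) this
    omega
  have hhd : h < d := by
    have : (2 : ℕ) ^ h < 2 ^ d := by omega
    exact (Nat.pow_lt_pow_iff_right (by norm_num)).1 this
  by_cases hA : v = 2 ^ h
  · -- v is a power of two : witness u = 0
    refine ⟨0, by positivity, Or.inr ⟨h, hhd, by rw [Nat.zero_xor, hA]⟩, ?_⟩
    have hcle : cnt d 0 p ≤ d - (h + 1) := by
      apply cnt_le
      intro t ht htp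
      rw [Nat.zero_xor] at htp
      have := (hpmem _).1 htp
      have : (2 : ℕ) ^ t ≤ 2 ^ h := Nat.pow_le_pow_right (by norm_num) (by omega)
      omega
    omega
  · set v' := v - 2 ^ h with hv'_def
    have hv'pos : v' ≠ 0 := by omega
    have hvsplit : v = 2 ^ h + v' := by omega
    have hv'lt : v' < 2 ^ h := by omega
    set j := Nat.log 2 v' with hj_def
    have hv'_lt : v' < 2 ^ (j + 1) := Nat.lt_pow_succ_log_self (by norm_num) v'
    have hv'_ge : 2 ^ j ≤ v' := Nat.pow_log_le_self 2 hv'pos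
    have hjh : j < h := by
      have : (2 : ℕ) ^ j < 2 ^ h := by omega
      exact (Nat.pow_lt_pow_iff_right (by norm_num)).1 this
    by_cases hB : v' = 2 ^ j
    · -- v = 2^h + 2^j : witness u = 2^j
      have hveq : v = 2 ^ h + 2 ^ j := by omega
      have hxorv : 2 ^ j ^^^ v = 2 ^ h := by
        rw [hveq, ← xor_two_pow_two_pow (by omega : h ≠ j), Nat.xor_comm (2 ^ h),
          ← Nat.xor_assoc, Nat.xor_self, Nat.zero_xor]
      refine ⟨2 ^ j, by
          have : (2:ℕ) ^ j < 2 ^ d := Nat.pow_lt_pow_right (by norm_num) (by omega)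
          exact this, Or.inr ⟨h, hhd, hxorv⟩, ?_⟩
      have hcle : cnt d (2 ^ j) p ≤ d - (h + 1) := by
        apply cnt_le
        intro t ht htp
        have hmem := (hpmem _).1 htp
        by_cases htj : t = j
        · subst htj
          rw [Nat.xor_self] at hmem
          omega
        · rw [xor_two_pow_two_pow (by omega : j ≠ t)] at hmem
          have : (2:ℕ) ^ t ≤ 2 ^ h := Nat.pow_le_pow_right (by norm_num) (by omega)
          omega
      omega
    · -- v has at least three bits set : witness u = v
      set v'' := v' - 2 ^ j with hv''_def
      have hv''pos : v'' ≠ 0 := by omega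
      have hv''lt : v'' < 2 ^ j := by omega
      set j₂ := Nat.log 2 v'' with hj2_def
      have hv''_ge : 2 ^ j₂ ≤ v'' := Nat.pow_log_le_self 2 hv''pos
      have hj2j : j₂ < j := by
        have h1 : v'' < 2 ^ (j₂ + 1) := Nat.lt_pow_succ_log_self (by norm_num) v''
        have : (2 : ℕ) ^ j₂ < 2 ^ j := by omega
        exact (Nat.pow_lt_pow_iff_right (by norm_num)).1 this
      -- bits h, j, j₂ of v are set
      have hbit_v' : ∀ i, v'.testBit i = if i = j then true else v''.testBit i := by
        intro i
        have : v' = 2 ^ j + v'' := by omega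
        rw [this, testBit_two_pow_add' hv''lt]
      have hbit_v : ∀ i, v.testBit i = if i = h then true else v'.testBit i := by
        intro i
        rw [hvsplit, testBit_two_pow_add' hv'lt]
      have hbh : v.testBit h = true := by rw [hbit_v, if_pos rfl]
      have hbj : v.testBit j = true := by
        rw [hbit_v, if_neg (by omega), hbit_v', if_pos rfl]
      have hbj2 : v.testBit j₂ = true := by
        rw [hbit_v, if_neg (by omega), hbit_v', if_neg (by omega)]
        exact testBit_log hv''pos
      refine ⟨v, hv2d, Or.inl rfl, ?_⟩
      have hsub : ((Finset.range d).filter fun t => v ^^^ 2 ^ t ∈ p)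
          ⊆ (Finset.range d) \ {h, j, j₂} := by
        intro t ht
        simp only [Finset.mem_filter, Finset.mem_range] at ht
        have hmem := (hpmem _).1 ht.2
        have hbt : v.testBit t = false := by
          rcases Bool.eq_false_or_eq_true (v.testBit t) with htr | hf
          · have := flip_lt htr
            omega
          · exact hf
        rw [Finset.mem_sdiff, Finset.mem_range]
        refine ⟨ht.1, ?_⟩
        simp only [Finset.mem_insert, Finset.mem_singleton]
        rintro (rfl | rfl | rfl)
        · rw [hbh] at hbt; exact absurd hbt (by simp)
        · rw [hbj] at hbt; exact absurd hbt (by simp)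
        · rw [hbj2] at hbt; exact absurd hbt (by simp)
      have hcard : cnt d v p ≤ d - 3 := by
        have h1 : ({h, j, j₂} : Finset ℕ) ⊆ Finset.range d := by
          intro x hx
          simp only [Finset.mem_insert, Finset.mem_singleton] at hx
          rw [Finset.mem_range]
          rcases hx with rfl | rfl | rfl <;> omega
        have h2 : ({h, j, j₂} : Finset ℕ).card = 3 := by
          rw [Finset.card_insert_of_notMem (by simp; omega),
            Finset.card_insert_of_notMem (by simp; omega), Finset.card_singleton]
        calc cnt d v p ≤ ((Finset.range d) \ {h, j, j₂}).card := Finset.card_le_card hsub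
          _ = d - 3 := by rw [Finset.card_sdiff_of_subset h1, h2, Finset.card_range]
      omega


lemma h8_of {d : ℕ} (hd : 2 < d) : 8 ≤ 2 ^ d := by
  calc (8 : ℕ) = 2 ^ 3 := by norm_num
    _ ≤ 2 ^ d := Nat.pow_le_pow_right (by norm_num) hd

lemma cnt_tail_le {d : ℕ} (hd : 2 < d) (u a : ℕ) (tp : List ℕ)
    (hch : ∀ t, t < a → (u ^^^ 2 ^ t < 8 ∧ (u ^^^ 2 ^ t) ∉ tp)) :
    cnt d u (descL d ++ tp) ≤ d - a := by
  apply cnt_le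
  intro t ht hmem
  obtain ⟨hlt, hnin⟩ := hch t ht
  rw [List.mem_append, mem_descL hd] at hmem
  rcases hmem with ⟨h1, _⟩ | h1
  · omega
  · exact hnin h1

lemma stepT1 {d : ℕ} (hd : 2 < d) : StepOK d (d - 2) (descL d ++ []) 7 := by
  refine ⟨7, by have := h8_of hd; omega, Or.inl rfl, ?_⟩
  have := cnt_tail_le hd 7 3 [] (by decide)
  omega

lemma stepT2 {d : ℕ} (hd : 2 < d) : StepOK d (d - 2) (descL d ++ [7]) 4 := by
  refine ⟨0, by have := h8_of hd; omega, Or.inr ⟨2, by omega, by decide⟩, ?_⟩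
  have := cnt_tail_le hd 0 3 [7] (by decide)
  omega

lemma stepT3 {d : ℕ} (hd : 2 < d) : StepOK d (d - 2) (descL d ++ [7, 4]) 2 := by
  refine ⟨2, by have := h8_of hd; omega, Or.inl rfl, ?_⟩
  have := cnt_tail_le hd 2 3 [7, 4] (by decide)
  omega

lemma stepT4 {d : ℕ} (hd : 2 < d) : StepOK d (d - 2) (descL d ++ [7, 4, 2]) 6 := by
  refine ⟨4, by have := h8_of hd; omega, Or.inr ⟨1, by omega, by decide⟩, ?_⟩
  have := cnt_tail_le hd 4 3 [7, 4, 2] (by decide)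
  omega

lemma stepT5 {d : ℕ} (hd : 2 < d) : StepOK d (d - 2) (descL d ++ [7, 4, 2, 6]) 1 := by
  refine ⟨1, by have := h8_of hd; omega, Or.inl rfl, ?_⟩
  have := cnt_tail_le hd 1 3 [7, 4, 2, 6] (by decide)
  omega

lemma stepT6 {d : ℕ} (hd : 2 < d) : StepOK d (d - 2) (descL d ++ [7, 4, 2, 6, 1]) 5 := by
  refine ⟨1, by have := h8_of hd; omega, Or.inr ⟨2, by omega, by decide⟩, ?_⟩
  have := cnt_tail_le hd 1 3 [7, 4, 2, 6, 1] (by decide)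
  omega

lemma stepT7 {d : ℕ} (hd : 2 < d) : StepOK d (d - 1) (descL d ++ [7, 4, 2, 6, 1, 5]) 3 := by
  refine ⟨1, by have := h8_of hd; omega, Or.inr ⟨1, by omega, by decide⟩, ?_⟩
  have := cnt_tail_le hd 1 2 [7, 4, 2, 6, 1, 5] (by decide)
  omega

lemma allOK_tailB {d : ℕ} (hd : 2 < d) :
    ∀ p v s, [7, 4, 2, 6, 1, 5] = p ++ v :: s → StepOK d (d - 2) (descL d ++ p) v := by
  intro p v s h
  rcases p with _ | ⟨a1, _ | ⟨a2, _ | ⟨a3, _ | ⟨a4, _ | ⟨a5, _ | ⟨a6, p⟩⟩⟩⟩⟩⟩ <;>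
    simp only [List.nil_append, List.cons_append, List.cons.injEq, List.nil_eq,
      List.append_eq_nil_iff] at h
  · obtain ⟨rfl, -⟩ := h
    exact stepT1 hd
  · obtain ⟨rfl, rfl, -⟩ := h
    exact stepT2 hd
  · obtain ⟨rfl, rfl, rfl, -⟩ := h
    exact stepT3 hd
  · obtain ⟨rfl, rfl, rfl, rfl, -⟩ := h
    exact stepT4 hd
  · obtain ⟨rfl, rfl, rfl, rfl, rfl, -⟩ := h
    exact stepT5 hd
  · obtain ⟨rfl, rfl, rfl, rfl, rfl, rfl, -⟩ := h
    exact stepT6 hd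
  · obtain ⟨-, -, -, -, -, -, h⟩ := h
    exact absurd h.2 (by simp)

lemma allOK_tailA {d : ℕ} (hd : 2 < d) :
    ∀ p v s, [7, 4, 2, 6, 1, 5, 3] = p ++ v :: s → StepOK d (d - 1) (descL d ++ p) v := by
  intro p v s h
  rcases p with _ | ⟨a1, _ | ⟨a2, _ | ⟨a3, _ | ⟨a4, _ | ⟨a5, _ | ⟨a6, _ | ⟨a7, p⟩⟩⟩⟩⟩⟩⟩ <;>
    simp only [List.nil_append, List.cons_append, List.cons.injEq, List.nil_eq,
      List.append_eq_nil_iff] at h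
  · obtain ⟨rfl, -⟩ := h
    exact stepOK_mono (stepT1 hd) (by omega)
  · obtain ⟨rfl, rfl, -⟩ := h
    exact stepOK_mono (stepT2 hd) (by omega)
  · obtain ⟨rfl, rfl, rfl, -⟩ := h
    exact stepOK_mono (stepT3 hd) (by omega)
  · obtain ⟨rfl, rfl, rfl, rfl, -⟩ := h
    exact stepOK_mono (stepT4 hd) (by omega)
  · obtain ⟨rfl, rfl, rfl, rfl, rfl, -⟩ := h
    exact stepOK_mono (stepT5 hd) (by omega)
  · obtain ⟨rfl, rfl, rfl, rfl, rfl, rfl, -⟩ := h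
    exact stepOK_mono (stepT6 hd) (by omega)
  · obtain ⟨rfl, rfl, rfl, rfl, rfl, rfl, rfl, -⟩ := h
    exact stepT7 hd
  · obtain ⟨-, -, -, -, -, -, -, h⟩ := h
    exact absurd h.2 (by simp)

def listA (d : ℕ) : List ℕ := descL d ++ [7, 4, 2, 6, 1, 5, 3]
def listB (d : ℕ) : List ℕ := descL d ++ [7, 4, 2, 6, 1, 5]

lemma tail_lt_8 {m : ℕ} (h : m ∈ [7, 4, 2, 6, 1, 5, 3]) : m < 8 := by
  simp only [List.mem_cons, List.not_mem_nil, or_false] at h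
  rcases h with rfl | rfl | rfl | rfl | rfl | rfl | rfl <;> norm_num

lemma tailB_lt_8 {m : ℕ} (h : m ∈ [7, 4, 2, 6, 1, 5]) : m < 8 := by
  simp only [List.mem_cons, List.not_mem_nil, or_false] at h
  rcases h with rfl | rfl | rfl | rfl | rfl | rfl <;> norm_num

lemma listA_bounds {d : ℕ} (hd : 2 < d) : ∀ m ∈ listA d, m < 2 ^ d := by
  intro m hm
  rcases List.mem_append.1 hm with h | h
  · exact ((mem_descL hd).1 h).2
  · have := tail_lt_8 h
    have := h8_of hd
    omega

lemma listB_bounds {d : ℕ} (hd : 2 < d) : ∀ m ∈ listB d, m < 2 ^ d := by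
  intro m hm
  rcases List.mem_append.1 hm with h | h
  · exact ((mem_descL hd).1 h).2
  · have := tailB_lt_8 h
    have := h8_of hd
    omega

lemma listA_nodup {d : ℕ} (hd : 2 < d) : (listA d).Nodup := by
  refine List.Nodup.append (nodup_descL d) (by decide) ?_
  intro a ha hb
  have h1 := ((mem_descL hd).1 ha).1
  have h2 := tail_lt_8 hb
  omega

lemma listB_nodup {d : ℕ} (hd : 2 < d) : (listB d).Nodup := by
  refine List.Nodup.append (nodup_descL d) (by decide) ?_
  intro a ha hb
  have h1 := ((mem_descL hd).1 ha).1
  have h2 := tailB_lt_8 hb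
  omega

lemma descL_length {d : ℕ} : (descL d).length = 2 ^ d - 8 := by
  rw [descL, List.length_reverse, List.length_range']

lemma listA_length {d : ℕ} (hd : 2 < d) : (listA d).length = 2 ^ d - 1 := by
  have := h8_of hd
  rw [listA, List.length_append, descL_length]
  norm_num
  omega

lemma listB_length {d : ℕ} (hd : 2 < d) : (listB d).length = 2 ^ d - 2 := by
  have := h8_of hd
  rw [listB, List.length_append, descL_length]
  norm_num
  omega

lemma grundyA {d : ℕ} (hd : 2 < d) :
    IsGrundySeq (d - 1) (closedNbhd (hypercubeGraph d)) (hypercubeGraph d).neighborSet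
      ((listA d).map (vtx d)) :=
  isGrundySeq_of (listA d) (listA_bounds hd) (listA_nodup hd)
    (allOK_append (fun p v s h => stepOK_mono (allOK_desc hd p v s h) (by omega))
      (allOK_tailA hd))

lemma grundyB {d : ℕ} (hd : 2 < d) :
    IsGrundySeq (d - 2) (closedNbhd (hypercubeGraph d)) (hypercubeGraph d).neighborSet
      ((listB d).map (vtx d)) :=
  isGrundySeq_of (listB d) (listB_bounds hd) (listB_nodup hd)
    (allOK_append (allOK_desc hd) (allOK_tailB hd))

end HCaux


/-- For `d > 2`, `γ_gr^{L,d-1}(Q_d) = 2^d - 1` and `γ_gr^{L,d-2}(Q_d) = 2^d - 2`. -/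
theorem kLGrundy_hypercube_top_cases (d : ℕ) (hd : 2 < d) :
    kLGrundy (hypercubeGraph d) (d - 1) = 2 ^ d - 1 ∧
      kLGrundy (hypercubeGraph d) (d - 2) = 2 ^ d - 2 := by
  have h8 := HCaux.h8_of hd
  constructor
  · apply IsGreatest.csSup_eq
    constructor
    · exact ⟨(HCaux.listA d).map (HCaux.vtx d), HCaux.grundyA hd, by
        rw [List.length_map, HCaux.listA_length hd]⟩
    · rintro m ⟨S, hS, rfl⟩
      have := HCaux.length_bound hS
      omega
  · apply IsGreatest.csSup_eq
    constructor
    · exact ⟨(HCaux.listB d).map (HCaux.vtx d), HCaux.grundyB hd, by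
        rw [List.length_map, HCaux.listB_length hd]⟩
    · rintro m ⟨S, hS, rfl⟩
      have := HCaux.length_bound hS
      omega
end
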